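/- arXiv:1309.1994 — 6 statements merged into one kernel-verified Lean document; each statement's English description precedes it below -/
import Mathlib

section
/- Let G be the Minkowski sum c_1 Δ_{I_1} + ... + c_m Δ_{I_m} in ℝ^n, where each c_i is a positive integer, each I_i ⊆ [n] is nonempty, and Δ_I denotes the convex hull of {e_i : i ∈ I}. Then G = {(t_1,...,t_n) ∈ ℝ^n : Σ_i t_i = z_{[n]} and Σ_{i ∈ A} t_i ≤ z_A for all A ⊆ [n]}, where z_A := Σ_{j : I_j ∩ A ≠ ∅} c_j. -/
open Pointwise

/-- The face `Δ_I` of the standard simplex: the convex hull of the standard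
basis vectors `e i` for `i ∈ I`. -/
def simplexFace {n : ℕ} (I : Finset (Fin n)) : Set (Fin n → ℝ) :=
  convexHull ℝ {x : Fin n → ℝ | ∃ i ∈ I, x = Pi.single i 1}

def zf {n m : ℕ} (I : Fin m → Finset (Fin n)) (c : Fin m → ℕ) (A : Finset (Fin n)) : ℝ :=
  ∑ j ∈ Finset.univ.filter (fun j => (I j ∩ A).Nonempty), (c j : ℝ)

lemma simplexFace_eq {n : ℕ} {I : Finset (Fin n)} (hI : I.Nonempty) :
    simplexFace I = {x : Fin n → ℝ |
      (∀ i, 0 ≤ x i) ∧ (∀ i ∉ I, x i = 0) ∧ ∑ i, x i = 1} := by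
  apply le_antisymm
  · apply convexHull_min
    · rintro x ⟨i, hi, rfl⟩
      refine ⟨fun j => ?_, fun j hj => ?_, ?_⟩
      · rcases eq_or_ne j i with rfl | hji
        · simp
        · simp [Pi.single_apply, hji]
      · have : j ≠ i := fun h => hj (h ▸ hi)
        simp [Pi.single_apply, this]
      · simp [Finset.sum_pi_single]
    · intro x hx y hy a b ha hb hab
      obtain ⟨hx0, hxs, hx1⟩ := hx
      obtain ⟨hy0, hys, hy1⟩ := hy
      refine ⟨fun i => add_nonneg (mul_nonneg ha (hx0 i)) (mul_nonneg hb (hy0 i)),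
        fun i hi => by simp [Pi.add_apply, hxs i hi, hys i hi], ?_⟩
      simp only [Pi.add_apply, Pi.smul_apply, smul_eq_mul]
      rw [Finset.sum_add_distrib, ← Finset.mul_sum, ← Finset.mul_sum, hx1, hy1]
      simpa using hab
  · rintro x ⟨hx0, hxs, hx1⟩
    have hsum : ∑ i ∈ I, x i = 1 := by
      rw [← hx1]
      exact Finset.sum_subset (Finset.subset_univ I) (fun i _ hi => hxs i hi)
    have hmem := I.centerMass_mem_convexHull (w := x) (z := fun i => (Pi.single i 1 : Fin n → ℝ))
      (fun i hi => hx0 i) (by rw [hsum]; norm_num)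
      (fun i hi => show (Pi.single i 1 : Fin n → ℝ) ∈ {x : Fin n → ℝ | ∃ k ∈ I, x = Pi.single k 1} from ⟨i, hi, rfl⟩)
    convert hmem using 1
    · rfl
    rw [Finset.centerMass, hsum, inv_one, one_smul]
    funext j
    rw [Finset.sum_apply]
    simp only [Pi.smul_apply, smul_eq_mul]
    rcases em (j ∈ I) with hj | hj
    · rw [Finset.sum_eq_single j (fun i _ hij => by simp [Pi.single_apply, hij.symm])
        (fun h => absurd hj h)]
      simp
    · rw [hxs j hj]
      apply (Finset.sum_eq_zero ?_).symm
      intro i hi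
      have : j ≠ i := fun h => hj (h ▸ hi)
      simp [Pi.single_apply, this.symm]

lemma greedy_exists {n : ℕ} (h : Finset (Fin n) → ℝ) (h0 : h ∅ = 0)
    (hmono : ∀ B C, B ⊆ C → h B ≤ h C)
    (hsuper : ∀ B C, h B + h C ≤ h (B ∪ C) + h (B ∩ C)) (J : Finset (Fin n)) :
    ∃ x : Fin n → ℝ, (∀ i, 0 ≤ x i) ∧ (∀ i ∉ J, x i = 0) ∧
      (∑ i ∈ J, x i = h J) ∧ (∀ B ⊆ J, h B ≤ ∑ i ∈ B, x i) := by
  induction J using Finset.induction_on with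
  | empty =>
    refine ⟨0, fun i => le_refl 0, fun _ _ => rfl, by simp [h0], ?_⟩
    intro B hB
    rw [Finset.subset_empty.mp hB]
    simp [h0]
  | @insert a s ha ih =>
    obtain ⟨x, hx0, hxs, hxsum, hxlb⟩ := ih
    refine ⟨Function.update x a (h (insert a s) - h s), ?_, ?_, ?_, ?_⟩
    · intro i
      rcases eq_or_ne i a with rfl | hia
      · rw [Function.update_self]
        exact sub_nonneg.mpr (hmono _ _ (Finset.subset_insert _ s))
      · rw [Function.update_of_ne hia]; exact hx0 i
    · intro i hi
      have hia : i ≠ a := fun e => hi (e ▸ Finset.mem_insert_self a s)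
      rw [Function.update_of_ne hia]
      exact hxs i (fun hmem => hi (Finset.mem_insert_of_mem hmem))
    · rw [Finset.sum_insert ha, Function.update_self]
      rw [Finset.sum_congr rfl (fun i hi => Function.update_of_ne (by rintro rfl; exact ha hi) _ x),
        hxsum]
      ring
    · intro B hB
      rcases em (a ∈ B) with haB | haB
      · have hBs : B \ {a} ⊆ s := by
          intro i hi
          rcases Finset.mem_sdiff.mp hi with ⟨hiB, hia⟩
          rcases Finset.mem_insert.mp (hB hiB) with rfl | his
          · exact absurd (Finset.mem_singleton_self i) hia
          · exact his
        have key : h B + h s ≤ h (insert a s) + h (B \ {a}) := by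
          have h1 : B ∪ s = insert a s := by
            apply Finset.Subset.antisymm
            · exact Finset.union_subset hB (Finset.subset_insert a s)
            · intro i hi
              rcases Finset.mem_insert.mp hi with rfl | his
              · exact Finset.mem_union_left s haB
              · exact Finset.mem_union_right B his
          have h2 : B ∩ s = B \ {a} := by
            apply Finset.Subset.antisymm
            · intro i hi
              rcases Finset.mem_inter.mp hi with ⟨hiB, his⟩
              exact Finset.mem_sdiff.mpr ⟨hiB, fun e => ha (Finset.mem_singleton.mp e ▸ his)⟩
            · intro i hi
              rcases Finset.mem_sdiff.mp hi with ⟨hiB, hia⟩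
              rcases Finset.mem_insert.mp (hB hiB) with rfl | his
              · exact absurd (Finset.mem_singleton_self i) hia
              · exact Finset.mem_inter.mpr ⟨hiB, his⟩
          have := hsuper B s
          rw [h1, h2] at this
          exact this
        have hsplit : ∑ i ∈ B, Function.update x a (h (insert a s) - h s) i
            = (h (insert a s) - h s) + ∑ i ∈ B \ {a}, x i := by
          rw [← Finset.add_sum_erase B _ haB, Function.update_self, Finset.erase_eq]
          congr 1
          exact Finset.sum_congr rfl (fun i hi => Function.update_of_ne
            (fun e => (Finset.mem_sdiff.mp hi).2 (Finset.mem_singleton.mpr e)) _ x)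
        rw [hsplit]
        have := hxlb (B \ {a}) hBs
        linarith [key, this]
      · have : ∑ i ∈ B, Function.update x a (h (insert a s) - h s) i = ∑ i ∈ B, x i :=
          Finset.sum_congr rfl (fun i hi => Function.update_of_ne (by rintro rfl; exact haB hi) _ x)
        rw [this]
        exact hxlb B (fun i hi => by
          rcases Finset.mem_insert.mp (hB hi) with rfl | his
          · exact absurd hi haB
          · exact his)

variable {n m : ℕ}

lemma zf_eq_sum_ite (I : Fin m → Finset (Fin n)) (c : Fin m → ℕ) (A : Finset (Fin n)) :
    zf I c A = ∑ j : Fin m, (if (I j ∩ A).Nonempty then (c j : ℝ) else 0) := by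
  rw [zf, Finset.sum_filter]

lemma zf_submodular (I : Fin m → Finset (Fin n)) (c : Fin m → ℕ) (A B : Finset (Fin n)) :
    zf I c (A ∪ B) + zf I c (A ∩ B) ≤ zf I c A + zf I c B := by
  simp only [zf_eq_sum_ite, ← Finset.sum_add_distrib]
  apply Finset.sum_le_sum
  intro j _
  have hU : (I j ∩ (A ∪ B)).Nonempty → (I j ∩ A).Nonempty ∨ (I j ∩ B).Nonempty := by
    rintro ⟨i, hi⟩
    rcases Finset.mem_inter.mp hi with ⟨h1, h2⟩
    rcases Finset.mem_union.mp h2 with h | h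
    · exact Or.inl ⟨i, Finset.mem_inter.mpr ⟨h1, h⟩⟩
    · exact Or.inr ⟨i, Finset.mem_inter.mpr ⟨h1, h⟩⟩
  have hIA : (I j ∩ (A ∩ B)).Nonempty → (I j ∩ A).Nonempty ∧ (I j ∩ B).Nonempty := by
    rintro ⟨i, hi⟩
    rcases Finset.mem_inter.mp hi with ⟨h1, h2⟩
    rcases Finset.mem_inter.mp h2 with ⟨h3, h4⟩
    exact ⟨⟨i, Finset.mem_inter.mpr ⟨h1, h3⟩⟩, ⟨i, Finset.mem_inter.mpr ⟨h1, h4⟩⟩⟩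
  have hA : (I j ∩ A).Nonempty → (I j ∩ (A ∪ B)).Nonempty := by
    rintro ⟨i, hi⟩
    rcases Finset.mem_inter.mp hi with ⟨h1, h2⟩
    exact ⟨i, Finset.mem_inter.mpr ⟨h1, Finset.mem_union_left _ h2⟩⟩
  have hB : (I j ∩ B).Nonempty → (I j ∩ (A ∪ B)).Nonempty := by
    rintro ⟨i, hi⟩
    rcases Finset.mem_inter.mp hi with ⟨h1, h2⟩
    exact ⟨i, Finset.mem_inter.mpr ⟨h1, Finset.mem_union_right _ h2⟩⟩
  have hcj : (0:ℝ) ≤ (c j : ℝ) := Nat.cast_nonneg _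
  split_ifs with h1 h2 h3 h4 h5 h6 h7 <;>
    first
    | linarith
    | (exfalso; tauto)

lemma zf_mono (I : Fin m → Finset (Fin n)) (c : Fin m → ℕ) {A B : Finset (Fin n)}
    (hAB : A ⊆ B) : zf I c A ≤ zf I c B := by
  apply Finset.sum_le_sum_of_subset_of_nonneg
  · intro j hj
    simp only [Finset.mem_filter, Finset.mem_univ, true_and] at *
    rcases hj with ⟨i, hi⟩
    rcases Finset.mem_inter.mp hi with ⟨h1, h2⟩
    exact ⟨i, Finset.mem_inter.mpr ⟨h1, hAB h2⟩⟩
  · intro j _ _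
    exact Nat.cast_nonneg _

lemma zf_empty (I : Fin m → Finset (Fin n)) (c : Fin m → ℕ) : zf I c ∅ = 0 := by
  rw [zf_eq_sum_ite]
  apply Finset.sum_eq_zero
  intro j _
  simp

lemma zf_update (I : Fin m → Finset (Fin n)) (c : Fin m → ℕ) (j0 : Fin m)
    (hcj0 : 0 < c j0) (A : Finset (Fin n)) :
    zf I c A = zf I (Function.update c j0 (c j0 - 1)) A
      + (if (I j0 ∩ A).Nonempty then (1:ℝ) else 0) := by
  rw [zf_eq_sum_ite, zf_eq_sum_ite]
  have key : ∀ j : Fin m, (if (I j ∩ A).Nonempty then (c j : ℝ) else 0)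
      = (if (I j ∩ A).Nonempty then ((Function.update c j0 (c j0 - 1)) j : ℝ) else 0)
        + (if j = j0 then (if (I j0 ∩ A).Nonempty then (1:ℝ) else 0) else 0) := by
    intro j
    rcases eq_or_ne j j0 with rfl | hj
    · simp only [Function.update_self, if_pos rfl]
      split_ifs with h
      · rw [Nat.cast_sub hcj0]; ring
      · ring
    · simp [Function.update_of_ne hj, if_neg hj]
  rw [Finset.sum_congr rfl (fun j _ => key j), Finset.sum_add_distrib,
    Finset.sum_ite_eq' Finset.univ j0 (fun _ => if (I j0 ∩ A).Nonempty then (1:ℝ) else 0)]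
  simp

lemma step_lemma {n m : ℕ} (I : Fin m → Finset (Fin n)) (c : Fin m → ℕ)
    (hI : ∀ j, (I j).Nonempty) (j0 : Fin m) (hcj0 : 0 < c j0) :
    simplexFace (I j0) +
      {t : Fin n → ℝ | (∑ i, t i) = zf I (Function.update c j0 (c j0 - 1)) Finset.univ ∧
        ∀ A, (∑ i ∈ A, t i) ≤ zf I (Function.update c j0 (c j0 - 1)) A}
    = {t : Fin n → ℝ | (∑ i, t i) = zf I c Finset.univ ∧
        ∀ A, (∑ i ∈ A, t i) ≤ zf I c A} := by
  set c' := Function.update c j0 (c j0 - 1) with hc'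
  set J := I j0 with hJdef
  have hJne : J.Nonempty := hI j0
  have huniv_ne : (I j0 ∩ Finset.univ).Nonempty := by
    obtain ⟨i, hi⟩ := hJne
    exact ⟨i, Finset.mem_inter.mpr ⟨hi, Finset.mem_univ i⟩⟩
  have hzuniv : zf I c Finset.univ = zf I c' Finset.univ + 1 := by
    rw [zf_update I c j0 hcj0, if_pos huniv_ne]
  apply le_antisymm
  · rintro w ⟨x, hx, s, hs, rfl⟩
    rw [simplexFace_eq hJne] at hx
    obtain ⟨hx0, hxsupp, hxsum⟩ := hx
    obtain ⟨hs1, hs2⟩ := hs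
    constructor
    · simp only [Pi.add_apply]
      rw [Finset.sum_add_distrib, hxsum, hs1, hzuniv]
      ring
    · intro A
      simp only [Pi.add_apply]
      rw [Finset.sum_add_distrib, zf_update I c j0 hcj0 A]
      have hxA : (∑ i ∈ A, x i) ≤ (if (I j0 ∩ A).Nonempty then (1:ℝ) else 0) := by
        split_ifs with h
        · rw [← hxsum]
          exact Finset.sum_le_sum_of_subset_of_nonneg (Finset.subset_univ A)
            (fun i _ _ => hx0 i)
        · apply le_of_eq
          apply Finset.sum_eq_zero
          intro i hi
          apply hxsupp
          intro hiJ
          exact h ⟨i, Finset.mem_inter.mpr ⟨hiJ, hi⟩⟩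
      have := hs2 A
      linarith
  · intro t ht
    obtain ⟨ht1, ht2⟩ := ht
    set F : Finset (Fin n) → Finset (Finset (Fin n)) :=
      fun B => Finset.univ.powerset.filter (fun A => A ∩ J ⊆ B) with hF
    have hFne : ∀ B, (F B).Nonempty := by
      intro B
      refine ⟨∅, ?_⟩
      simp [hF]
    set f : Finset (Fin n) → ℝ := fun A => (∑ i ∈ A, t i) - zf I c' A with hf
    set h : Finset (Fin n) → ℝ := fun B => (F B).sup' (hFne B) f with hh
    have hmemF : ∀ {A B : Finset (Fin n)}, A ∩ J ⊆ B → A ∈ F B := by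
      intro A B hAB
      simp [hF, hAB]
    have hfle : ∀ {A B : Finset (Fin n)}, A ∩ J ⊆ B → f A ≤ h B := by
      intro A B hAB
      exact Finset.le_sup' f (hmemF hAB)
    have hzA : ∀ A, (∑ i ∈ A, t i) ≤ zf I c' A + (if (I j0 ∩ A).Nonempty then (1:ℝ) else 0) := by
      intro A
      rw [← zf_update I c j0 hcj0 A]
      exact ht2 A
    have h0 : h ∅ = 0 := by
      apply le_antisymm
      · apply Finset.sup'_le
        intro A hA
        simp only [hF, Finset.mem_filter, Finset.mem_powerset] at hA
        have hnone : ¬ (I j0 ∩ A).Nonempty := by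
          rintro ⟨i, hi⟩
          rcases Finset.mem_inter.mp hi with ⟨h1, h2⟩
          exact absurd (hA.2 (Finset.mem_inter.mpr ⟨h2, h1⟩)) (Finset.notMem_empty i)
        have := hzA A
        rw [if_neg hnone] at this
        simp only [hf]
        linarith
      · have : f ∅ = 0 := by simp [hf, zf_empty]
        rw [← this]
        exact hfle (by simp)
    have hmono : ∀ B C, B ⊆ C → h B ≤ h C := by
      intro B C hBC
      apply Finset.sup'_le
      intro A hA
      simp only [hF, Finset.mem_filter, Finset.mem_powerset] at hA
      exact hfle (hA.2.trans hBC)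
    have hsuper : ∀ B C, h B + h C ≤ h (B ∪ C) + h (B ∩ C) := by
      intro B C
      obtain ⟨A, hA, hAeq⟩ := Finset.exists_mem_eq_sup' (hFne B) f
      obtain ⟨A', hA', hA'eq⟩ := Finset.exists_mem_eq_sup' (hFne C) f
      simp only [hF, Finset.mem_filter, Finset.mem_powerset] at hA hA'
      have hmod : f A + f A' ≤ f (A ∪ A') + f (A ∩ A') := by
        simp only [hf]
        have hsum : (∑ i ∈ A ∪ A', t i) + (∑ i ∈ A ∩ A', t i)
            = (∑ i ∈ A, t i) + (∑ i ∈ A', t i) := Finset.sum_union_inter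
        have hz := zf_submodular I c' A A'
        linarith
      have hU : f (A ∪ A') ≤ h (B ∪ C) := by
        apply hfle
        rw [Finset.union_inter_distrib_right]
        exact Finset.union_subset_union hA.2 hA'.2
      have hInt : f (A ∩ A') ≤ h (B ∩ C) := by
        apply hfle
        intro i hi
        simp only [Finset.mem_inter] at hi ⊢
        exact ⟨hA.2 (Finset.mem_inter.mpr ⟨hi.1.1, hi.2⟩),
          hA'.2 (Finset.mem_inter.mpr ⟨hi.1.2, hi.2⟩)⟩
      have hB' : h B = f A := hAeq
      have hC' : h C = f A' := hA'eq
      linarith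
    have hJ1 : h J ≤ 1 := by
      apply Finset.sup'_le
      intro A hA
      have := hzA A
      simp only [hf]
      split_ifs at this with hcond
      · linarith
      · linarith
    obtain ⟨x, hx0, hxsupp, hxsum, hxlb⟩ := greedy_exists h h0 hmono hsuper J
    obtain ⟨i0, hi0⟩ := hJne
    set ε := 1 - h J with hε
    have hε0 : 0 ≤ ε := by rw [hε]; linarith
    set xt := Function.update x i0 (x i0 + ε) with hxt
    have hxtge : ∀ i, x i ≤ xt i := by
      intro i
      rcases eq_or_ne i i0 with rfl | hii
      · rw [hxt, Function.update_self]; linarith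
      · rw [hxt, Function.update_of_ne hii]
    have hxt0 : ∀ i, 0 ≤ xt i := fun i => le_trans (hx0 i) (hxtge i)
    have hxtsupp : ∀ i ∉ J, xt i = 0 := by
      intro i hi
      have : i ≠ i0 := fun e => hi (e ▸ hi0)
      rw [hxt, Function.update_of_ne this]
      exact hxsupp i hi
    have hxtJ : ∑ i ∈ J, xt i = 1 := by
      have hsplit : ∑ i ∈ J, xt i = xt i0 + ∑ i ∈ J.erase i0, xt i :=
        (Finset.add_sum_erase J xt hi0).symm
      have hsplit2 : ∑ i ∈ J, x i = x i0 + ∑ i ∈ J.erase i0, x i :=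
        (Finset.add_sum_erase J x hi0).symm
      have heq : ∑ i ∈ J.erase i0, xt i = ∑ i ∈ J.erase i0, x i :=
        Finset.sum_congr rfl (fun i hi =>
          Function.update_of_ne (Finset.ne_of_mem_erase hi) _ x)
      have hval : xt i0 = x i0 + ε := Function.update_self i0 (x i0 + ε) x
      rw [hsplit, heq, hval]
      rw [hε]
      linarith [hsplit2, hxsum]
    have hxtsum : ∑ i, xt i = 1 := by
      rw [← hxtJ]
      exact (Finset.sum_subset (Finset.subset_univ J) (fun i _ hi => hxtsupp i hi)).symm ▸ rfl
    have hxtA : ∀ A : Finset (Fin n), (∑ i ∈ A, t i) - zf I c' A ≤ ∑ i ∈ A, xt i := by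
      intro A
      have h1 : f A ≤ h (A ∩ J) := hfle (Finset.Subset.refl _)
      have h2 : h (A ∩ J) ≤ ∑ i ∈ A ∩ J, x i := hxlb _ Finset.inter_subset_right
      have h3 : (∑ i ∈ A ∩ J, x i) ≤ ∑ i ∈ A ∩ J, xt i :=
        Finset.sum_le_sum (fun i _ => hxtge i)
      have h4 : (∑ i ∈ A ∩ J, xt i) = ∑ i ∈ A, xt i := by
        apply Finset.sum_subset Finset.inter_subset_left
        intro i hiA hiAJ
        exact hxtsupp i (fun hiJ => hiAJ (Finset.mem_inter.mpr ⟨hiA, hiJ⟩))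
      simp only [hf] at h1
      linarith
    refine ⟨xt, ?_, t - xt, ⟨?_, ?_⟩, by funext i; simp⟩
    · rw [show simplexFace (I j0) = simplexFace J from rfl, simplexFace_eq (hI j0)]
      exact ⟨hxt0, hxtsupp, hxtsum⟩
    · simp only [Pi.sub_apply]
      rw [Finset.sum_sub_distrib, ht1, hxtsum, hzuniv]
      ring
    · intro A
      simp only [Pi.sub_apply]
      rw [Finset.sum_sub_distrib]
      have := hxtA A
      linarith

lemma gen_thm {n m : ℕ} (I : Fin m → Finset (Fin n)) (hI : ∀ j, (I j).Nonempty) :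
    ∀ N (c : Fin m → ℕ), (∑ j, c j) = N →
    (∑ j : Fin m, (c j : ℝ) • simplexFace (I j)) =
      {t : Fin n → ℝ | (∑ i, t i) = zf I c Finset.univ ∧
        ∀ A, (∑ i ∈ A, t i) ≤ zf I c A} := by
  intro N
  induction N using Nat.strong_induction_on with
  | _ N IH =>
    intro c hcN
    have hne : ∀ j, (simplexFace (I j)).Nonempty := by
      intro j
      obtain ⟨i, hi⟩ := hI j
      exact ⟨Pi.single i 1, subset_convexHull ℝ _ ⟨i, hi, rfl⟩⟩
    rcases Nat.eq_zero_or_pos N with rfl | hN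
    · have hc0 : ∀ j, c j = 0 := by
        intro j
        have := Finset.sum_eq_zero_iff.mp hcN j (Finset.mem_univ j)
        exact this
      have hzero : ∀ j, (c j : ℝ) • simplexFace (I j) = (0 : Set (Fin n → ℝ)) := by
        intro j
        rw [hc0 j, Nat.cast_zero]
        exact Set.zero_smul_set (hne j)
      have hLHS : (∑ j : Fin m, (c j : ℝ) • simplexFace (I j)) = 0 := by
        rw [Finset.sum_congr rfl (fun j _ => hzero j), Finset.sum_const_zero]
      have hzf : ∀ A, zf I c A = 0 := by
        intro A
        apply Finset.sum_eq_zero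
        intro j _
        rw [hc0 j, Nat.cast_zero]
      rw [hLHS]
      ext t
      simp only [Set.mem_setOf_eq, hzf, Set.mem_zero]
      constructor
      · rintro rfl
        exact ⟨by simp, fun A => by simp⟩
      · rintro ⟨h1, h2⟩
        funext i
        have hle : t i ≤ 0 := by simpa using h2 {i}
        have h3 : (∑ k ∈ Finset.univ.erase i, t k) ≤ 0 := h2 (Finset.univ.erase i)
        have h4 : t i + ∑ k ∈ Finset.univ.erase i, t k = ∑ k, t k :=
          Finset.add_sum_erase _ t (Finset.mem_univ i)
        simp only [Pi.zero_apply]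
        linarith
    · obtain ⟨j0, hj0⟩ : ∃ j0, 0 < c j0 := by
        by_contra hcon
        push_neg at hcon
        have : ∑ j : Fin m, c j = 0 := Finset.sum_eq_zero (fun j _ => Nat.le_zero.mp (hcon j))
        omega
      set c' := Function.update c j0 (c j0 - 1) with hc'def
      have herase : ∑ j ∈ Finset.univ.erase j0, c' j = ∑ j ∈ Finset.univ.erase j0, c j :=
        Finset.sum_congr rfl (fun j hj => by
          rw [hc'def, Function.update_of_ne (Finset.ne_of_mem_erase hj)])
      have hsplit : c j0 + ∑ j ∈ Finset.univ.erase j0, c j = N := by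
        rw [Finset.add_sum_erase _ _ (Finset.mem_univ j0)]; exact hcN
      have hsplit' : ∑ j : Fin m, c' j = (c j0 - 1) + ∑ j ∈ Finset.univ.erase j0, c j := by
        rw [← Finset.add_sum_erase _ c' (Finset.mem_univ j0), herase, hc'def,
          Function.update_self]
      have hlt : ∑ j : Fin m, c' j < N := by omega
      have IH' := IH (∑ j : Fin m, c' j) hlt c' rfl
      have hcast : ((c j0 : ℕ) : ℝ) = 1 + ((c' j0 : ℕ) : ℝ) := by
        rw [hc'def, Function.update_self, Nat.cast_sub hj0]
        simp
      have hsmul : ((c j0 : ℕ) : ℝ) • simplexFace (I j0)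
          = simplexFace (I j0) + ((c' j0 : ℕ) : ℝ) • simplexFace (I j0) := by
        have hconv : Convex ℝ (simplexFace (I j0)) := convex_convexHull ℝ _
        rw [hcast, hconv.add_smul zero_le_one (Nat.cast_nonneg _), one_smul]
      have heraseS : ∑ j ∈ Finset.univ.erase j0, ((c j : ℕ) : ℝ) • simplexFace (I j)
          = ∑ j ∈ Finset.univ.erase j0, ((c' j : ℕ) : ℝ) • simplexFace (I j) :=
        Finset.sum_congr rfl (fun j hj => by
          rw [hc'def, Function.update_of_ne (Finset.ne_of_mem_erase hj)])
      calc ∑ j : Fin m, ((c j : ℕ) : ℝ) • simplexFace (I j)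
          = ((c j0 : ℕ) : ℝ) • simplexFace (I j0)
            + ∑ j ∈ Finset.univ.erase j0, ((c j : ℕ) : ℝ) • simplexFace (I j) :=
            (Finset.add_sum_erase _ _ (Finset.mem_univ j0)).symm
        _ = simplexFace (I j0) + (((c' j0 : ℕ) : ℝ) • simplexFace (I j0)
            + ∑ j ∈ Finset.univ.erase j0, ((c' j : ℕ) : ℝ) • simplexFace (I j)) := by
            rw [hsmul, heraseS, add_assoc]
        _ = simplexFace (I j0) + ∑ j : Fin m, ((c' j : ℕ) : ℝ) • simplexFace (I j) := by
            congr 1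
            exact Finset.add_sum_erase Finset.univ
              (fun j => ((c' j : ℕ) : ℝ) • simplexFace (I j)) (Finset.mem_univ j0)
        _ = simplexFace (I j0) +
            {t : Fin n → ℝ | (∑ i, t i) = zf I c' Finset.univ ∧
              ∀ A, (∑ i ∈ A, t i) ≤ zf I c' A} := by rw [IH']
        _ = _ := step_lemma I c hI j0 hj0

/-- the Minkowski sum `G = c 1 • Δ_{I 1} + ... + c m • Δ_{I m}`
(with `c j` positive integers and `I j` nonempty) equals
`{t | ∑ i, t i = z [n] ∧ ∀ A, ∑ i in A, t i ≤ z A}` where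
`z A = ∑_{j : I j ∩ A ≠ ∅} c j`. -/
theorem generalizedPermutohedron_eq_inequalities
    (n m : ℕ) (I : Fin m → Finset (Fin n)) (c : Fin m → ℕ)
    (hI : ∀ j, (I j).Nonempty) (hc : ∀ j, 0 < c j) :
    (∑ j : Fin m, (c j : ℝ) • simplexFace (I j)) =
      {t : Fin n → ℝ |
        (∑ i : Fin n, t i) =
          (∑ j ∈ Finset.univ.filter (fun j => (I j ∩ Finset.univ).Nonempty), (c j : ℝ)) ∧
        ∀ A : Finset (Fin n),
          (∑ i ∈ A, t i) ≤
            ∑ j ∈ Finset.univ.filter (fun j => (I j ∩ A).Nonempty), (c j : ℝ)} :=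
  gen_thm I hI (∑ j, c j) c rfl
end

section
/- Every integer lattice point of the Minkowski sum c_1 Δ_{I_1} + ... + c_m Δ_{I_m} (with c_i positive integers, I_i ⊆ [n] nonempty) can be written as a sum Σ_j p_j where each p_j is an integer lattice point of c_j Δ_{I_j}. -/
open Pointwise

lemma mem_simplexFace_iff {n : ℕ} {I : Finset (Fin n)} {w : Fin n → ℝ} :
    w ∈ simplexFace I ↔
      (∀ i, 0 ≤ w i) ∧ (∀ i, w i ≠ 0 → i ∈ I) ∧ ∑ i, w i = 1 := by
  constructor
  · intro hw
    have hsub : simplexFace I ⊆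
        {v : Fin n → ℝ | (∀ i, 0 ≤ v i) ∧ (∀ i, v i ≠ 0 → i ∈ I) ∧ ∑ i, v i = 1} := by
      apply convexHull_min
      · rintro v ⟨i, hi, rfl⟩
        refine ⟨fun i' => ?_, fun i' h => ?_, ?_⟩
        · rcases eq_or_ne i' i with h | h <;> simp [Pi.single_apply, h]
        · have hii : i' = i := by
            by_contra hne
            simp [Pi.single_apply, hne] at h
          exact hii ▸ hi
        · simp [Pi.single_apply]
      · rintro a ⟨ha0, haI, ha1⟩ b ⟨hb0, hbI, hb1⟩ s t hs ht hst
        refine ⟨fun i => ?_, fun i h => ?_, ?_⟩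
        · simp only [Pi.add_apply, Pi.smul_apply, smul_eq_mul]
          exact add_nonneg (mul_nonneg hs (ha0 i)) (mul_nonneg ht (hb0 i))
        · simp only [Pi.add_apply, Pi.smul_apply, smul_eq_mul] at h
          rcases eq_or_ne (a i) 0 with h1 | h1
          · rcases eq_or_ne (b i) 0 with h2 | h2
            · simp [h1, h2] at h
            · exact hbI i h2
          · exact haI i h1
        · simp only [Pi.add_apply, Pi.smul_apply, smul_eq_mul, Finset.sum_add_distrib,
            ← Finset.mul_sum, ha1, hb1, mul_one, hst]
    exact hsub hw
  · rintro ⟨h0, hsupp, h1⟩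
    have hsumI : ∑ i ∈ I, w i = 1 := by
      rw [← h1]
      exact Finset.sum_subset I.subset_univ
        (fun i _ hi => by_contra fun h => hi (hsupp i h))
    have hmem := Finset.centerMass_mem_convexHull (R := ℝ)
      (s := {x : Fin n → ℝ | ∃ i ∈ I, x = Pi.single i 1}) I
      (w := w) (fun i _ => h0 i) (by rw [hsumI]; norm_num)
      (z := fun i => (Pi.single i 1 : Fin n → ℝ)) (fun i hi => ⟨i, hi, rfl⟩)
    have hcm : I.centerMass w (fun i => (Pi.single i 1 : Fin n → ℝ)) = w := by
      rw [Finset.centerMass, hsumI, inv_one, one_smul]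
      funext i'
      rw [Finset.sum_apply]
      have hterm : ∀ i ∈ I, (w i • (Pi.single i 1 : Fin n → ℝ)) i' =
          if i' = i then w i else 0 := by
        intro i _
        simp [Pi.single_apply]
      rw [Finset.sum_congr rfl hterm, Finset.sum_ite_eq]
      split
      · rfl
      · rename_i hni
        by_contra h
        exact hni (hsupp i' (Ne.symm h))
    rwa [hcm] at hmem

lemma mem_smul_simplexFace_iff {n : ℕ} {I : Finset (Fin n)} {c : ℝ} (hc : 0 < c)
    {w : Fin n → ℝ} :
    w ∈ c • simplexFace I ↔
      (∀ i, 0 ≤ w i) ∧ (∀ i, w i ≠ 0 → i ∈ I) ∧ ∑ i, w i = c := by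
  rw [Set.mem_smul_set_iff_inv_smul_mem₀ hc.ne', mem_simplexFace_iff]
  have hc' : c⁻¹ ≠ 0 := inv_ne_zero hc.ne'
  constructor
  · rintro ⟨h0, hsupp, h1⟩
    refine ⟨fun i => ?_, fun i hi => ?_, ?_⟩
    · have := h0 i
      simp only [Pi.smul_apply, smul_eq_mul] at this
      nlinarith [inv_pos.mpr hc]
    · exact hsupp i (by simp [Pi.smul_apply, smul_eq_mul, hc', hi])
    · have h2 : ∑ i, c⁻¹ * w i = 1 := by
        simpa [Pi.smul_apply, smul_eq_mul] using h1
      rw [← Finset.mul_sum] at h2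
      field_simp at h2
      linarith
  · rintro ⟨h0, hsupp, h1⟩
    refine ⟨fun i => ?_, fun i hi => ?_, ?_⟩
    · simp only [Pi.smul_apply, smul_eq_mul]
      have := h0 i
      positivity
    · simp only [Pi.smul_apply, smul_eq_mul, mul_ne_zero_iff] at hi
      exact hsupp i hi.2
    · simp only [Pi.smul_apply, smul_eq_mul, ← Finset.mul_sum, h1]
      field_simp

/-- every integer lattice point of the Minkowski sum
`c 1 • Δ_{I 1} + ... + c m • Δ_{I m}` (with `c j` positive integers and `I j`
nonempty) is a sum `∑ j, p j` where each `p j` is an integer lattice point of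
`c j • Δ_{I j}`. -/
theorem lattice_point_decomposition
    (n m : ℕ) (I : Fin m → Finset (Fin n)) (c : Fin m → ℕ)
    (hI : ∀ j, (I j).Nonempty) (hc : ∀ j, 0 < c j)
    (x : Fin n → ℝ)
    (hx : x ∈ ∑ j : Fin m, (c j : ℝ) • simplexFace (I j))
    (hxint : ∀ i, ∃ z : ℤ, x i = z) :
    ∃ p : Fin m → (Fin n → ℝ),
      (∀ j, p j ∈ (c j : ℝ) • simplexFace (I j)) ∧
      (∀ j i, ∃ z : ℤ, p j i = z) ∧
      x = ∑ j : Fin m, p j := by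
  classical
  have hcR : ∀ j, (0:ℝ) < (c j : ℝ) := fun j => by exact_mod_cast hc j
  obtain ⟨y, hy, hysum⟩ := (Set.mem_fintype_sum _ x).mp hx
  have hy' : ∀ j, (∀ i, 0 ≤ y j i) ∧ (∀ i, y j i ≠ 0 → i ∈ I j) ∧ ∑ i, y j i = c j :=
    fun j => (mem_smul_simplexFace_iff (hcR j)).mp (hy j)
  have hy0 : ∀ j i, 0 ≤ y j i := fun j => (hy' j).1
  have hysupp : ∀ j i, y j i ≠ 0 → i ∈ I j := fun j => (hy' j).2.1
  have hyc : ∀ j, ∑ i, y j i = (c j : ℝ) := fun j => (hy' j).2.2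
  have hxy : ∀ i, x i = ∑ j, y j i := by
    intro i
    rw [← hysum, Finset.sum_apply]
  have hx0 : ∀ i, 0 ≤ x i := fun i => by
    rw [hxy i]; exact Finset.sum_nonneg fun j _ => hy0 j i
  have hz : ∀ i, ∃ z : ℕ, x i = (z : ℝ) := by
    intro i
    obtain ⟨z, hzi⟩ := hxint i
    have hz0 : 0 ≤ z := by
      have := hx0 i; rw [hzi] at this; exact_mod_cast this
    exact ⟨z.toNat, by rw [hzi]; exact_mod_cast (Int.toNat_of_nonneg hz0).symm⟩
  choose z hzx using hz
  have htotR : (∑ i, (z i : ℝ)) = ∑ j, (c j : ℝ) := by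
    calc ∑ i, (z i : ℝ) = ∑ i, x i := by simp_rw [hzx]
    _ = ∑ i, ∑ j, y j i := by simp_rw [hxy]
    _ = ∑ j, ∑ i, y j i := Finset.sum_comm
    _ = ∑ j, (c j : ℝ) := by simp_rw [hyc]
  have htot : (∑ i, z i) = ∑ j, c j := by exact_mod_cast htotR
  set t : ((j : Fin m) × Fin (c j)) → Finset ((i : Fin n) × Fin (z i)) :=
    fun a => Finset.univ.filter (fun b => b.1 ∈ I a.1) with ht
  have hall : ∀ s : Finset ((j : Fin m) × Fin (c j)), s.card ≤ (s.biUnion t).card := by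
    intro s
    set J := s.image Sigma.fst with hJ
    set S := J.biUnion I with hS
    have h1 : s.card ≤ ∑ j ∈ J, c j := by
      have hsub : s ⊆ J.sigma (fun j => Finset.univ) := by
        intro a ha
        rw [Finset.mem_sigma]
        exact ⟨Finset.mem_image_of_mem _ ha, Finset.mem_univ _⟩
      calc s.card ≤ (J.sigma (fun j => Finset.univ)).card := Finset.card_le_card hsub
        _ = ∑ j ∈ J, c j := by rw [Finset.card_sigma]; simp
    have h2 : s.biUnion t = Finset.univ.filter (fun b : (i : Fin n) × Fin (z i) => b.1 ∈ S) := by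
      ext b
      simp only [Finset.mem_biUnion, ht, Finset.mem_filter, Finset.mem_univ, true_and,
        hS, hJ, Finset.mem_image]
      constructor
      · rintro ⟨a, ha, hb⟩
        exact ⟨a.1, ⟨a, ha, rfl⟩, hb⟩
      · rintro ⟨j, ⟨a, ha, rfl⟩, hb⟩
        exact ⟨a, ha, hb⟩
    have h3 : (Finset.univ.filter (fun b : (i : Fin n) × Fin (z i) => b.1 ∈ S))
        = S.sigma (fun i => Finset.univ) := by
      ext b
      simp [Finset.mem_sigma]
    have h4 : (s.biUnion t).card = ∑ i ∈ S, z i := by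
      rw [h2, h3, Finset.card_sigma]; simp
    rw [h4]
    refine h1.trans ?_
    have key : (∑ j ∈ J, (c j : ℝ)) ≤ ∑ i ∈ S, (z i : ℝ) := by
      have hjc : ∀ j ∈ J, (c j : ℝ) = ∑ i ∈ S, y j i := by
        intro j hj
        rw [← hyc j]
        refine (Finset.sum_subset S.subset_univ fun i _ hi => ?_).symm
        by_contra h
        exact hi (hS ▸ Finset.mem_biUnion.mpr ⟨j, hj, hysupp j i h⟩)
      calc ∑ j ∈ J, (c j : ℝ) = ∑ j ∈ J, ∑ i ∈ S, y j i := Finset.sum_congr rfl hjc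
        _ ≤ ∑ j : Fin m, ∑ i ∈ S, y j i := by
            refine Finset.sum_le_sum_of_subset_of_nonneg J.subset_univ fun j _ _ => ?_
            exact Finset.sum_nonneg fun i _ => hy0 j i
        _ = ∑ i ∈ S, ∑ j : Fin m, y j i := Finset.sum_comm
        _ = ∑ i ∈ S, x i := by simp_rw [← hxy]
        _ = ∑ i ∈ S, (z i : ℝ) := by simp_rw [hzx]
    exact_mod_cast key
  obtain ⟨f, hfinj, hft⟩ := (Finset.all_card_le_biUnion_card_iff_exists_injective t).mp hall
  have hfI : ∀ a : (j : Fin m) × Fin (c j), (f a).1 ∈ I a.1 := by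
    intro a
    have := hft a
    simp only [ht, Finset.mem_filter] at this
    exact this.2
  have hcard : Fintype.card ((j : Fin m) × Fin (c j)) = Fintype.card ((i : Fin n) × Fin (z i)) := by
    simp only [Fintype.card_sigma, Fintype.card_fin]
    exact htot.symm
  have hfbij : Function.Bijective f :=
    (Fintype.bijective_iff_injective_and_card f).mpr ⟨hfinj, hcard⟩
  set p : Fin m → Fin n → ℝ := fun j i =>
    ((Finset.univ.filter fun k : Fin (c j) => (f ⟨j, k⟩).1 = i).card : ℝ) with hp
  have hpsum : ∀ j, ∑ i, p j i = (c j : ℝ) := by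
    intro j
    have hfw : (Finset.univ : Finset (Fin (c j))).card =
        ∑ i : Fin n, (Finset.univ.filter fun k : Fin (c j) => (f ⟨j, k⟩).1 = i).card :=
      Finset.card_eq_sum_card_fiberwise (fun k _ => Finset.mem_univ _)
    simp only [hp]
    rw [← Nat.cast_sum, ← hfw]
    simp
  refine ⟨p, ?_, ?_, ?_⟩
  · intro j
    rw [mem_smul_simplexFace_iff (hcR j)]
    refine ⟨fun i => by simp only [hp]; positivity, fun i hi => ?_, hpsum j⟩
    simp only [hp, ne_eq, Nat.cast_eq_zero, Finset.card_eq_zero,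
      ← Finset.nonempty_iff_ne_empty] at hi
    obtain ⟨k, hk⟩ := hi
    exact (Finset.mem_filter.mp hk).2 ▸ hfI ⟨j, k⟩
  · intro j i
    exact ⟨((Finset.univ.filter fun k : Fin (c j) => (f ⟨j, k⟩).1 = i).card : ℤ), by
      simp [hp]⟩
  · funext i
    rw [hzx i, Finset.sum_apply]
    have hb : (Finset.univ.filter fun b : (i' : Fin n) × Fin (z i') => b.1 = i).card = z i := by
      have heq : (Finset.univ.filter fun b : (i' : Fin n) × Fin (z i') => b.1 = i)
          = ({i} : Finset (Fin n)).sigma fun _ => Finset.univ := by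
        ext b
        simp [Finset.mem_sigma]
      rw [heq, Finset.card_sigma]
      simp
    have ha : (Finset.univ.filter fun a : (j : Fin m) × Fin (c j) => (f a).1 = i).card
        = (Finset.univ.filter fun b : (i' : Fin n) × Fin (z i') => b.1 = i).card := by
      apply Finset.card_bij (fun a _ => f a)
      · intro a haa
        simp only [Finset.mem_filter, Finset.mem_univ, true_and] at haa ⊢
        exact haa
      · intro a₁ _ a₂ _ h
        exact hfinj h
      · intro b hbb
        obtain ⟨a, rfl⟩ := hfbij.2 b
        refine ⟨a, ?_, rfl⟩
        simpa using hbb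
    have hfib : (Finset.univ.filter fun a : (j : Fin m) × Fin (c j) => (f a).1 = i).card
        = ∑ j : Fin m, (Finset.univ.filter fun k : Fin (c j) => (f ⟨j, k⟩).1 = i).card := by
      rw [Finset.card_eq_sum_card_fiberwise
        (f := Sigma.fst) (t := (Finset.univ : Finset (Fin m))) (fun a _ => Finset.mem_univ _)]
      refine Finset.sum_congr rfl fun j _ => ?_
      refine (Finset.card_bij (fun k _ => (⟨j, k⟩ : (j : Fin m) × Fin (c j))) ?_ ?_ ?_).symm
      · intro k hk
        simp only [Finset.mem_filter, Finset.mem_univ, true_and] at hk ⊢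
        simp [hk]
      · intro k₁ _ k₂ _ h
        simpa using h
      · rintro ⟨j', k⟩ hk
        simp only [Finset.mem_filter, Finset.mem_univ, true_and] at hk
        obtain ⟨hk1, rfl⟩ := hk
        exact ⟨k, by simpa using hk1, rfl⟩
    have : ∑ j : Fin m, p j i
        = ((∑ j : Fin m, (Finset.univ.filter fun k : Fin (c j) => (f ⟨j, k⟩).1 = i).card : ℕ) : ℝ) := by
      simp [hp]
    rw [this, ← hfib, ha, hb]
end

section
/- Let G = Σ_{1 ≤ i ≤ j ≤ r+1} c_{i,j} Δ_{[i,j]} ⊆ ℝ^{r+1} with all c_{i,j} positive integers, and let T be a plane binary tree on [r+1] with the binary search labeling, where descendants of node k form the interval [l_k, r_k]. Then the point v_T = (t_1,...,t_{r+1}) with t_k = Σ_{l_k ≤ i ≤ k ≤ j ≤ r_k} c_{i,j} is a vertex of G. -/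
open Pointwise

/-- Plane binary trees with nodes labeled by natural numbers. -/
inductive LBTree : Type
  | leaf : LBTree
  | node : LBTree → ℕ → LBTree → LBTree

/-- The inorder list of labels. -/
def LBTree.inorder : LBTree → List ℕ
  | .leaf => []
  | .node l k r => l.inorder ++ k :: r.inorder

/-- The binary search property. -/
def LBTree.isBST : LBTree → Prop
  | .leaf => True
  | .node l k r =>
      (∀ m ∈ l.inorder, m < k) ∧ (∀ m ∈ r.inorder, k < m) ∧ l.isBST ∧ r.isBST

/-- `IsSubtree s t` : `s` occurs as a subtree of `t`. -/
def LBTree.IsSubtree (s : LBTree) : LBTree → Prop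
  | .leaf => s = .leaf
  | .node l k r => s = .node l k r ∨ s.IsSubtree l ∨ s.IsSubtree r

/-- The simplex `Δ_{[i,j]} ⊆ ℝ^{r+1}`: convex hull of the basis vectors `e k`
for `i ≤ k ≤ j` (coordinates indexed `1, ..., r+1`). -/
def intervalSimplex (r i j : ℕ) : Set (Fin (r + 1) → ℝ) :=
  convexHull ℝ {x | ∃ k, i ≤ k ∧ k ≤ j ∧
    x = fun t : Fin (r + 1) => if (t : ℕ) + 1 = k then (1 : ℝ) else 0}


lemma mem_setSum_decomp {E : Type*} [AddCommGroup E]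
    {ι : Type*} [DecidableEq ι] (A : Finset ι) (S : ι → Set E) :
    ∀ x ∈ ∑ a ∈ A, S a, ∃ g : ι → E, (∀ a ∈ A, g a ∈ S a) ∧ x = ∑ a ∈ A, g a := by
  classical
  induction A using Finset.cons_induction with
  | empty => intro x hx; simp at hx; exact ⟨0, by simp, by simpa using hx⟩
  | cons a A ha ih =>
    intro x hx
    rw [Finset.sum_cons] at hx
    obtain ⟨y, hy, z, hz, rfl⟩ := Set.mem_add.1 hx
    obtain ⟨g, hg, rfl⟩ := ih z hz
    refine ⟨Function.update g a y, ?_, ?_⟩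
    · intro b hb
      rcases Finset.mem_cons.1 hb with rfl | hb2
      · simpa using hy
      · rw [Function.update_of_ne (by rintro rfl; exact ha hb2)]; exact hg b hb2
    · rw [Finset.sum_cons, Function.update_self]
      congr 1
      exact Finset.sum_congr rfl fun b hb => (Function.update_of_ne (by rintro rfl; exact ha hb) _ _).symm

lemma sum_mem_setSum {E : Type*} [AddCommGroup E]
    {ι : Type*} (A : Finset ι) (S : ι → Set E) (p : ι → E)
    (h : ∀ a ∈ A, p a ∈ S a) : (∑ a ∈ A, p a) ∈ ∑ a ∈ A, S a := by
  classical
  induction A using Finset.cons_induction with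
  | empty => simp
  | cons a A ha ih =>
    rw [Finset.sum_cons, Finset.sum_cons]
    exact Set.add_mem_add (h a (Finset.mem_cons_self a A))
      (ih fun b hb => h b (Finset.mem_cons_of_mem hb))

lemma extreme_of_sum {E : Type*} [AddCommGroup E] [Module ℝ E]
    {ι : Type*} (A : Finset ι) (S : ι → Set E) (p : ι → E) (f : E →ₗ[ℝ] ℝ)
    (h1 : ∀ a ∈ A, p a ∈ S a)
    (h2 : ∀ a ∈ A, ∀ x ∈ S a, f x ≤ f (p a))
    (h3 : ∀ a ∈ A, ∀ x ∈ S a, f x = f (p a) → x = p a) :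
    (∑ a ∈ A, p a) ∈ Set.extremePoints ℝ (∑ a ∈ A, S a) := by
  classical
  have key : ∀ x ∈ ∑ a ∈ A, S a, f x ≤ f (∑ a ∈ A, p a) ∧ (f x = f (∑ a ∈ A, p a) → x = ∑ a ∈ A, p a) := by
    intro x hx
    obtain ⟨g, hg, rfl⟩ := mem_setSum_decomp A S x hx
    rw [map_sum, map_sum]
    constructor
    · exact Finset.sum_le_sum fun a ha => h2 a ha _ (hg a ha)
    · intro he
      have := (Finset.sum_eq_sum_iff_of_le (fun a ha => h2 a ha _ (hg a ha))).1 he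
      exact Finset.sum_congr rfl fun a ha => h3 a ha _ (hg a ha) (this a ha)
  refine ⟨sum_mem_setSum A S p h1, ?_⟩
  rintro x hx y hy ⟨a, b, ha, hb, hab, hv⟩
  have hfx := key x hx
  have hfy := key y hy
  have : f x = f (∑ a ∈ A, p a) ∧ f y = f (∑ a ∈ A, p a) := by
    have := congrArg f hv
    rw [map_add, map_smul, map_smul, smul_eq_mul, smul_eq_mul] at this
    have h1' := mul_le_mul_of_nonneg_left hfx.1 ha.le
    have h2' := mul_le_mul_of_nonneg_left hfy.1 hb.le
    have ht : a * f (∑ a ∈ A, p a) + b * f (∑ a ∈ A, p a) = f (∑ a ∈ A, p a) := by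
      rw [← add_mul, hab, one_mul]
    constructor
    · by_contra hne
      have hlt := lt_of_le_of_ne hfx.1 hne
      have := mul_lt_mul_of_pos_left hlt ha
      linarith
    · by_contra hne
      have hlt := lt_of_le_of_ne hfy.1 hne
      have := mul_lt_mul_of_pos_left hlt hb
      linarith
  exact hfx.2 this.1
lemma LBTree.isSubtree_refl : ∀ t : LBTree, t.IsSubtree t
  | .leaf => rfl
  | .node _ _ _ => Or.inl rfl

lemma LBTree.IsSubtree.trans : ∀ {s t u : LBTree}, s.IsSubtree t → t.IsSubtree u → s.IsSubtree u := by
  intro s t u hst htu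
  induction u with
  | leaf => rw [LBTree.IsSubtree] at htu; subst htu; exact hst
  | node l k r ihl ihr =>
    rcases htu with rfl | h | h
    · rcases hst with h' | h' | h'
      · exact Or.inl h'
      · exact Or.inr (Or.inl h')
      · exact Or.inr (Or.inr h')
    · exact Or.inr (Or.inl (ihl h))
    · exact Or.inr (Or.inr (ihr h))

lemma LBTree.subtree_inorder_subset : ∀ {s t : LBTree}, s.IsSubtree t →
    ∀ p ∈ s.inorder, p ∈ t.inorder := by
  intro s t hst
  induction t with
  | leaf => rw [LBTree.IsSubtree] at hst; subst hst; simp [LBTree.inorder]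
  | node l k r ihl ihr =>
    rcases hst with rfl | h | h
    · exact fun p hp => hp
    · intro p hp
      rw [LBTree.inorder, List.mem_append]
      exact Or.inl (ihl h p hp)
    · intro p hp
      rw [LBTree.inorder, List.mem_append, List.mem_cons]
      exact Or.inr (Or.inr (ihr h p hp))

lemma LBTree.exists_root : ∀ (t : LBTree), ∀ m ∈ t.inorder,
    ∃ l r, (LBTree.node l m r).IsSubtree t := by
  intro t
  induction t with
  | leaf => simp [LBTree.inorder]
  | node l k r ihl ihr =>
    intro m hm
    rw [LBTree.inorder, List.mem_append, List.mem_cons] at hm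
    rcases hm with hm | rfl | hm
    · obtain ⟨l', r', h⟩ := ihl m hm; exact ⟨l', r', Or.inr (Or.inl h)⟩
    · exact ⟨l, r, Or.inl rfl⟩
    · obtain ⟨l', r', h⟩ := ihr m hm; exact ⟨l', r', Or.inr (Or.inr h)⟩

lemma LBTree.isBST_subtree : ∀ {s t : LBTree}, t.isBST → s.IsSubtree t → s.isBST := by
  intro s t hb hst
  induction t with
  | leaf => rw [LBTree.IsSubtree] at hst; subst hst; trivial
  | node l k r ihl ihr =>
    rcases hst with rfl | h | h
    · exact hb
    · exact ihl hb.2.2.1 h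
    · exact ihr hb.2.2.2 h

lemma anc_exists_aux (lo hi : ℕ → ℕ) (lt : LBTree)
    (hdesc : ∀ l : LBTree, ∀ k : ℕ, ∀ rt : LBTree,
      (LBTree.node l k rt).IsSubtree lt →
      ∀ m : ℕ, m ∈ (LBTree.node l k rt).inorder ↔ (lo k ≤ m ∧ m ≤ hi k))
    (i j : ℕ) (hij : i ≤ j) :
    ∀ t : LBTree, t.IsSubtree lt → t.isBST → i ∈ t.inorder → j ∈ t.inorder →
    ∃ m, i ≤ m ∧ m ≤ j ∧ lo m ≤ i ∧ j ≤ hi m := by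
  intro t
  induction t with
  | leaf => simp [LBTree.inorder]
  | node l k rt ihl ihr =>
    intro hsub hbst hi' hj'
    by_cases h1 : i ≤ k
    · by_cases h2 : k ≤ j
      · exact ⟨k, h1, h2, ((hdesc _ _ _ hsub i).1 hi').1, ((hdesc _ _ _ hsub j).1 hj').2⟩
      · push_neg at h2
        have hj2 : j ∈ l.inorder := by
          rw [LBTree.inorder, List.mem_append, List.mem_cons] at hj'
          rcases hj' with h | rfl | h
          · exact h
          · omega
          · exact absurd (hbst.2.1 j h) (by omega)
        have hi2 : i ∈ l.inorder := by
          rw [LBTree.inorder, List.mem_append, List.mem_cons] at hi'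
          rcases hi' with h | rfl | h
          · exact h
          · omega
          · exact absurd (hbst.2.1 i h) (by omega)
        exact ihl (LBTree.IsSubtree.trans
          (show l.IsSubtree (LBTree.node l k rt) from Or.inr (Or.inl (LBTree.isSubtree_refl l)))
          hsub) hbst.2.2.1 hi2 hj2
    · push_neg at h1
      have hi2 : i ∈ rt.inorder := by
        rw [LBTree.inorder, List.mem_append, List.mem_cons] at hi'
        rcases hi' with h | rfl | h
        · exact absurd (hbst.1 i h) (by omega)
        · omega
        · exact h
      have hj2 : j ∈ rt.inorder := by
        rw [LBTree.inorder, List.mem_append, List.mem_cons] at hj'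
        rcases hj' with h | rfl | h
        · exact absurd (hbst.1 j h) (by omega)
        · omega
        · exact h
      exact ihr (LBTree.IsSubtree.trans
        (show rt.IsSubtree (LBTree.node l k rt) from Or.inr (Or.inr (LBTree.isSubtree_refl rt)))
        hsub) hbst.2.2.2 hi2 hj2

lemma strict_aux (r : ℕ) (lo hi : ℕ → ℕ) (lt : LBTree) (hbst : lt.isBST)
    (hlabels : lt.inorder.Perm (List.range' 1 (r + 1)))
    (hdesc : ∀ l : LBTree, ∀ k : ℕ, ∀ rt : LBTree,
      (LBTree.node l k rt).IsSubtree lt →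
      ∀ m : ℕ, m ∈ (LBTree.node l k rt).inorder ↔ (lo k ≤ m ∧ m ≤ hi k)) :
    ∀ b, 1 ≤ b → b ≤ r + 1 → ∀ a, lo b ≤ a → a ≤ hi b → a ≠ b →
      lo b ≤ lo a ∧ hi a ≤ hi b ∧ hi a + lo b < hi b + lo a := by
  have hmem : ∀ m, m ∈ lt.inorder ↔ 1 ≤ m ∧ m ≤ r + 1 := by
    intro m; rw [hlabels.mem_iff, List.mem_range'_1]; omega
  intro b hb1 hb2 a ha1 ha2 hab
  -- subtree rooted at b
  obtain ⟨l, rt, hsubb⟩ := LBTree.exists_root lt b ((hmem b).2 ⟨hb1, hb2⟩)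
  have charb := hdesc _ _ _ hsubb
  have hbstb : (LBTree.node l b rt).isBST := LBTree.isBST_subtree hbst hsubb
  -- a is in the subtree of b
  have hain : a ∈ (LBTree.node l b rt).inorder := (charb a).2 ⟨ha1, ha2⟩
  -- a is in [1, r+1]
  have ha01 : 1 ≤ a ∧ a ≤ r + 1 :=
    (hmem a).1 (LBTree.subtree_inorder_subset hsubb a hain)
  -- subtree rooted at a, and its side
  rw [LBTree.inorder, List.mem_append, List.mem_cons] at hain
  have main : (∀ p, lo a ≤ p → p ≤ hi a → p < b) ∨ (∀ p, lo a ≤ p → p ≤ hi a → b < p) := by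
    rcases hain with h | rfl | h
    · left
      obtain ⟨l', rt', hsuba⟩ := LBTree.exists_root l a h
      have hsubl : l.IsSubtree (LBTree.node l b rt) :=
        Or.inr (Or.inl (LBTree.isSubtree_refl l))
      have chara := hdesc _ _ _ ((hsuba.trans hsubl).trans hsubb)
      intro p hp1 hp2
      have hpin : p ∈ (LBTree.node l' a rt').inorder := (chara p).2 ⟨hp1, hp2⟩
      exact hbstb.1 p (LBTree.subtree_inorder_subset hsuba p hpin)
    · omega
    · right
      obtain ⟨l', rt', hsuba⟩ := LBTree.exists_root rt a h
      have hsubr : rt.IsSubtree (LBTree.node l b rt) :=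
        Or.inr (Or.inr (LBTree.isSubtree_refl rt))
      have chara := hdesc _ _ _ ((hsuba.trans hsubr).trans hsubb)
      intro p hp1 hp2
      have hpin : p ∈ (LBTree.node l' a rt').inorder := (chara p).2 ⟨hp1, hp2⟩
      exact hbstb.2.1 p (LBTree.subtree_inorder_subset hsuba p hpin)
  -- F1 for a
  obtain ⟨la, ra, hsuba'⟩ := LBTree.exists_root lt a ((hmem a).2 ha01)
  have chara' := hdesc _ _ _ hsuba'
  have hF1a : lo a ≤ a ∧ a ≤ hi a := (chara' a).1 (by
    rw [LBTree.inorder, List.mem_append, List.mem_cons]; exact Or.inr (Or.inl rfl))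
  have hF1b : lo b ≤ b ∧ b ≤ hi b := (charb b).1 (by
    rw [LBTree.inorder, List.mem_append, List.mem_cons]; exact Or.inr (Or.inl rfl))
  -- [lo a, hi a] ⊆ [lo b, hi b]
  have hsubset : ∀ p, lo a ≤ p → p ≤ hi a → lo b ≤ p ∧ p ≤ hi b := by
    intro p hp1 hp2
    have : p < b ∨ b < p := by rcases main with h | h; exacts [Or.inl (h p hp1 hp2), Or.inr (h p hp1 hp2)]
    -- need p ∈ subtree of b
    obtain ⟨l', rt', hsuba2⟩ : ∃ l' rt', (LBTree.node l' a rt').IsSubtree (LBTree.node l b rt) := by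
      rcases hain with h | rfl | h
      · obtain ⟨l', rt', hs⟩ := LBTree.exists_root l a h
        exact ⟨l', rt', hs.trans (Or.inr (Or.inl (LBTree.isSubtree_refl l)))⟩
      · omega
      · obtain ⟨l', rt', hs⟩ := LBTree.exists_root rt a h
        exact ⟨l', rt', hs.trans (Or.inr (Or.inr (LBTree.isSubtree_refl rt)))⟩
    have chara2 := hdesc _ _ _ (hsuba2.trans hsubb)
    have hpin : p ∈ (LBTree.node l' a rt').inorder := (chara2 p).2 ⟨hp1, hp2⟩
    exact (charb p).1 (LBTree.subtree_inorder_subset hsuba2 p hpin)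
  have h1 := (hsubset (lo a) le_rfl (by omega)).1
  have h2 := (hsubset (hi a) (by omega) le_rfl).2
  refine ⟨h1, h2, ?_⟩
  rcases main with h | h
  · have := h (hi a) (by omega) le_rfl
    omega
  · have := h (lo a) le_rfl (by omega)
    omega

lemma simplex_max (r : ℕ) (W : Fin (r+1) → ℝ) (i j : ℕ) (tm : Fin (r+1))
    (h1 : 1 ≤ i) (him : i ≤ (tm:ℕ)+1) (hmj : (tm:ℕ)+1 ≤ j) (hj : j ≤ r+1)
    (hW : ∀ t : Fin (r+1), i ≤ (t:ℕ)+1 → (t:ℕ)+1 ≤ j → t ≠ tm → W t < W tm) :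
    ∀ x ∈ intervalSimplex r i j,
      (∑ t, W t * x t) ≤ W tm ∧
      ((∑ t, W t * x t) = W tm → x = fun t => if t = tm then (1:ℝ) else 0) := by
  set K : Set (Fin (r+1) → ℝ) :=
    {x | (∀ t, 0 ≤ x t) ∧ (∑ t, x t) = 1 ∧
      ∀ t : Fin (r+1), ¬(i ≤ (t:ℕ)+1 ∧ (t:ℕ)+1 ≤ j) → x t = 0} with hKdef
  have hK : Convex ℝ K := by
    intro x hx y hy a b ha hb hab
    refine ⟨fun t => ?_, ?_, fun t ht => ?_⟩
    · simp only [Pi.add_apply, Pi.smul_apply, smul_eq_mul]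
      exact add_nonneg (mul_nonneg ha (hx.1 t)) (mul_nonneg hb (hy.1 t))
    · simp only [Pi.add_apply, Pi.smul_apply, smul_eq_mul]
      rw [Finset.sum_add_distrib, ← Finset.mul_sum, ← Finset.mul_sum, hx.2.1, hy.2.1,
        mul_one, mul_one]
      exact hab
    · simp only [Pi.add_apply, Pi.smul_apply, smul_eq_mul]
      rw [hx.2.2 t ht, hy.2.2 t ht]; ring
  have hPK : {x : Fin (r+1) → ℝ | ∃ k, i ≤ k ∧ k ≤ j ∧
      x = fun t : Fin (r + 1) => if (t : ℕ) + 1 = k then (1 : ℝ) else 0} ⊆ K := by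
    rintro x ⟨k, hk1, hk2, rfl⟩
    refine ⟨fun t => by dsimp only; split <;> norm_num, ?_, fun t ht => ?_⟩
    · rw [Finset.sum_eq_single (⟨k-1, by omega⟩ : Fin (r+1))]
      · rw [if_pos]; simp; omega
      · intro b _ hb; rw [if_neg]; intro hc; exact hb (Fin.ext (by simp; omega))
      · simp
    · show (if (t:ℕ)+1 = k then (1:ℝ) else 0) = 0
      split_ifs with h
      · exact absurd (by omega : i ≤ (t:ℕ)+1 ∧ (t:ℕ)+1 ≤ j) ht
      · rfl
  have hsub : intervalSimplex r i j ⊆ K := convexHull_min hPK hK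
  intro x hx
  replace hx : x ∈ K := hsub hx
  obtain ⟨hx1, hx2, hx3⟩ := hx
  have hle : ∀ t, W t * x t ≤ W tm * x t := by
    intro t
    by_cases ht : i ≤ (t:ℕ)+1 ∧ (t:ℕ)+1 ≤ j
    · by_cases htm : t = tm
      · subst htm; exact le_rfl
      · exact mul_le_mul_of_nonneg_right (hW t ht.1 ht.2 htm).le (hx1 t)
    · rw [hx3 t ht, mul_zero, mul_zero]
  have hsum : (∑ t, W tm * x t) = W tm := by rw [← Finset.mul_sum, hx2, mul_one]
  constructor
  · calc ∑ t, W t * x t ≤ ∑ t, W tm * x t := Finset.sum_le_sum (fun t _ => hle t)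
      _ = W tm := hsum
  · intro he
    have he2 : ∑ t, (W tm * x t - W t * x t) = 0 := by
      rw [Finset.sum_sub_distrib, hsum, he, sub_self]
    have hz := (Finset.sum_eq_zero_iff_of_nonneg (fun t _ => by linarith [hle t])).1 he2
    have hzero : ∀ t, t ≠ tm → x t = 0 := by
      intro t htm
      by_cases ht : i ≤ (t:ℕ)+1 ∧ (t:ℕ)+1 ≤ j
      · have hlt := hW t ht.1 ht.2 htm
        have hfac : (W tm - W t) * x t = 0 := by
          rw [sub_mul]; exact hz t (Finset.mem_univ t)
        rcases mul_eq_zero.1 hfac with h | h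
        · exact absurd h (by linarith)
        · exact h
      · exact hx3 t ht
    have hxm : x tm = 1 := by
      rwa [Finset.sum_eq_single tm (fun b _ hb => hzero b hb) (by simp)] at hx2
    funext t
    by_cases htm : t = tm
    · subst htm; simp [hxm]
    · simp [hzero t htm, htm]

noncomputable def dotL {n : ℕ} (W : Fin n → ℝ) : (Fin n → ℝ) →ₗ[ℝ] ℝ where
  toFun x := ∑ t, W t * x t
  map_add' x y := by simp [mul_add, Finset.sum_add_distrib]
  map_smul' a x := by
    simp only [Pi.smul_apply, smul_eq_mul, RingHom.id_apply, Finset.mul_sum]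
    exact Finset.sum_congr rfl fun t _ => by ring

lemma dotL_apply {n : ℕ} (W x : Fin n → ℝ) : dotL W x = ∑ t, W t * x t := rfl
/-- let `G = ∑_{1 ≤ i ≤ j ≤ r+1} c i j • Δ_{[i,j]}` with all
`c i j` positive integers, and let `lt` be a plane binary tree on `[r+1]` with
the binary search labeling, the set of descendants of the node labeled `k`
being the interval `[lo k, hi k]`. Then the point `v` with
`v k = ∑_{lo k ≤ i ≤ k ≤ j ≤ hi k} c i j` is a vertex (extreme point) of `G`. -/
theorem binary_tree_point_is_vertex
    (r : ℕ) (c : ℕ → ℕ → ℕ)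
    (hc : ∀ i j, 1 ≤ i → i ≤ j → j ≤ r + 1 → 0 < c i j)
    (lt : LBTree) (hbst : lt.isBST)
    (hlabels : lt.inorder.Perm (List.range' 1 (r + 1)))
    (lo hi : ℕ → ℕ)
    (hdesc : ∀ l : LBTree, ∀ k : ℕ, ∀ rt : LBTree,
      (LBTree.node l k rt).IsSubtree lt →
      ∀ m : ℕ, m ∈ (LBTree.node l k rt).inorder ↔ (lo k ≤ m ∧ m ≤ hi k))
    (v : Fin (r + 1) → ℝ)
    (hv : ∀ k : Fin (r + 1), v k =
      ∑ ij ∈ (Finset.Icc 1 (r + 1) ×ˢ Finset.Icc 1 (r + 1)).filter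
          (fun ij => lo ((k : ℕ) + 1) ≤ ij.1 ∧ ij.1 ≤ (k : ℕ) + 1 ∧
            (k : ℕ) + 1 ≤ ij.2 ∧ ij.2 ≤ hi ((k : ℕ) + 1)),
        (c ij.1 ij.2 : ℝ)) :
    v ∈ Set.extremePoints ℝ
      (∑ ij ∈ (Finset.Icc 1 (r + 1) ×ˢ Finset.Icc 1 (r + 1)).filter
          (fun ij => ij.1 ≤ ij.2),
        (c ij.1 ij.2 : ℝ) • intervalSimplex r ij.1 ij.2) := by
  classical
  have hmem : ∀ m, m ∈ lt.inorder ↔ 1 ≤ m ∧ m ≤ r + 1 := by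
    intro m; rw [hlabels.mem_iff, List.mem_range'_1]; omega
  have hstrict := strict_aux r lo hi lt hbst hlabels hdesc
  have hanc_ex : ∀ p : ℕ × ℕ, ∃ m, 1 ≤ p.1 → p.1 ≤ p.2 → p.2 ≤ r + 1 →
      (p.1 ≤ m ∧ m ≤ p.2 ∧ lo m ≤ p.1 ∧ p.2 ≤ hi m) := by
    intro p
    by_cases h : 1 ≤ p.1 ∧ p.1 ≤ p.2 ∧ p.2 ≤ r + 1
    · obtain ⟨m, hm⟩ := anc_exists_aux lo hi lt hdesc p.1 p.2 h.2.1 lt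
        (LBTree.isSubtree_refl lt) hbst
        ((hmem p.1).2 ⟨h.1, by omega⟩) ((hmem p.2).2 ⟨by omega, h.2.2⟩)
      exact ⟨m, fun _ _ _ => hm⟩
    · exact ⟨0, fun h1 h2 h3 => absurd ⟨h1, h2, h3⟩ h⟩
  choose anc hanc using hanc_ex
  have huniq : ∀ i j : ℕ, 1 ≤ i → i ≤ j → j ≤ r + 1 → ∀ k,
      lo k ≤ i → i ≤ k → k ≤ j → j ≤ hi k → k = anc (i, j) := by
    intro i j h1 h2 h3 k hk1 hk2 hk3 hk4
    obtain ⟨hm1, hm2, hm3, hm4⟩ := hanc (i, j) h1 h2 h3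
    by_contra hne
    have s1 := hstrict (anc (i, j)) (by omega) (by omega) k (by omega) (by omega) hne
    have s2 := hstrict k (by omega) (by omega) (anc (i, j)) (by omega) (by omega)
      (fun h => hne h.symm)
    omega
  -- the linear functional
  set W : Fin (r + 1) → ℝ := fun t => (hi ((t:ℕ)+1) : ℝ) - (lo ((t:ℕ)+1) : ℝ) with hWdef
  have hWlt : ∀ b, 1 ≤ b → b ≤ r + 1 → ∀ t : Fin (r+1), lo b ≤ (t:ℕ)+1 →
      (t:ℕ)+1 ≤ hi b → (t:ℕ)+1 ≠ b → ∀ tb : Fin (r+1), (tb:ℕ)+1 = b → W t < W tb := by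
    intro b h1 h2 t ht1 ht2 hne tb htb
    have h3 := (hstrict b h1 h2 ((t:ℕ)+1) ht1 ht2 hne).2.2
    have h4 : (hi ((t:ℕ)+1) : ℝ) + lo b < (hi b : ℝ) + lo ((t:ℕ)+1) := by exact_mod_cast h3
    rw [hWdef]; dsimp only; rw [htb]; linarith
  -- basis vectors
  set e : ℕ → (Fin (r + 1) → ℝ) :=
    fun k => fun t : Fin (r + 1) => if (t : ℕ) + 1 = k then (1 : ℝ) else 0 with hedef
  set A := (Finset.Icc 1 (r + 1) ×ˢ Finset.Icc 1 (r + 1)).filter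
      (fun ij : ℕ × ℕ => ij.1 ≤ ij.2) with hAdef
  set p : ℕ × ℕ → (Fin (r + 1) → ℝ) :=
    fun ij => (c ij.1 ij.2 : ℝ) • e (anc ij) with hpdef
  have hA : ∀ ij ∈ A, 1 ≤ ij.1 ∧ ij.1 ≤ ij.2 ∧ ij.2 ≤ r + 1 := by
    intro ij h
    rw [hAdef, Finset.mem_filter, Finset.mem_product, Finset.mem_Icc, Finset.mem_Icc] at h
    omega
  -- per-summand facts
  have hfacts : ∀ ij ∈ A,
      e (anc ij) ∈ intervalSimplex r ij.1 ij.2 ∧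
      (∀ y ∈ intervalSimplex r ij.1 ij.2, dotL W y ≤ dotL W (e (anc ij)) ∧
        (dotL W y = dotL W (e (anc ij)) → y = e (anc ij))) := by
    intro ij hij
    obtain ⟨h1, h2, h3⟩ := hA ij hij
    obtain ⟨hm1, hm2, hm3, hm4⟩ := hanc ij h1 h2 h3
    set m := anc ij with hmdef
    have hm0 : 1 ≤ m ∧ m ≤ r + 1 := ⟨by omega, by omega⟩
    set tm : Fin (r + 1) := ⟨m - 1, by omega⟩ with htmdef
    have htm1 : (tm : ℕ) + 1 = m := by rw [htmdef]; simp; omega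
    have hW' : ∀ t : Fin (r+1), ij.1 ≤ (t:ℕ)+1 → (t:ℕ)+1 ≤ ij.2 → t ≠ tm → W t < W tm := by
      intro t ht1 ht2 htne
      refine hWlt m hm0.1 hm0.2 t (by omega) (by omega) ?_ tm htm1
      intro hc
      exact htne (Fin.ext (by omega))
    have hkey := simplex_max r W ij.1 ij.2 tm h1 (by omega) (by omega) h3 hW'
    have hetm : e m = fun t => if t = tm then (1:ℝ) else 0 := by
      funext t
      show (if (t:ℕ) + 1 = m then (1:ℝ) else 0) = (if t = tm then (1:ℝ) else 0)
      by_cases ht : t = tm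
      · subst ht; rw [if_pos htm1, if_pos rfl]
      · rw [if_neg (fun hc => ht (Fin.ext (by omega))), if_neg ht]
    have hfem : dotL W (e m) = W tm := by
      rw [dotL_apply, hedef]
      dsimp only
      rw [Finset.sum_eq_single tm]
      · rw [if_pos htm1, mul_one]
      · intro b _ hb
        rw [if_neg (fun hc => hb (Fin.ext (by omega))), mul_zero]
      · simp
    constructor
    · show e m ∈ convexHull ℝ _
      exact subset_convexHull ℝ _ ⟨m, hm1, hm2, by rw [hedef]⟩
    · intro y hy
      have := hkey y hy
      rw [dotL_apply, hfem]
      exact ⟨this.1, fun he => by rw [this.2 he, hetm]⟩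
  -- v is the sum of the chosen points
  have hveq : v = ∑ ij ∈ A, p ij := by
    funext k
    rw [hv k, Finset.sum_apply, hAdef, Finset.sum_filter, Finset.sum_filter]
    apply Finset.sum_congr rfl
    intro ij hij
    rw [Finset.mem_product, Finset.mem_Icc, Finset.mem_Icc] at hij
    by_cases hle : ij.1 ≤ ij.2
    · rw [if_pos hle]
      rw [hpdef]
      dsimp only
      rw [Pi.smul_apply, hedef]
      dsimp only
      by_cases hch : lo ((k:ℕ)+1) ≤ ij.1 ∧ ij.1 ≤ (k:ℕ)+1 ∧ (k:ℕ)+1 ≤ ij.2 ∧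
          ij.2 ≤ hi ((k:ℕ)+1)
      · rw [if_pos hch]
        have hk := huniq ij.1 ij.2 hij.1.1 hle hij.2.2 ((k:ℕ)+1)
          hch.1 hch.2.1 hch.2.2.1 hch.2.2.2
        rw [if_pos hk, smul_eq_mul, mul_one]
      · rw [if_neg hch]
        have hne : (k:ℕ)+1 ≠ anc ij := by
          intro he
          obtain ⟨a1, a2, a3, a4⟩ := hanc ij hij.1.1 hle hij.2.2
          rw [← he] at a1 a2 a3 a4
          exact hch ⟨a3, a1, a2, a4⟩
        rw [if_neg hne, smul_eq_mul, mul_zero]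
    · rw [if_neg hle, if_neg (fun hch => hle (by omega))]
  rw [hveq]
  apply extreme_of_sum A (fun ij => (c ij.1 ij.2 : ℝ) • intervalSimplex r ij.1 ij.2)
    p (dotL W)
  · intro ij hij
    rw [hpdef]
    exact Set.smul_mem_smul_set (hfacts ij hij).1
  · intro ij hij x hx
    obtain ⟨y, hy, rfl⟩ := hx
    rw [hpdef]
    dsimp only
    rw [map_smul, map_smul, smul_eq_mul, smul_eq_mul]
    exact mul_le_mul_of_nonneg_left ((hfacts ij hij).2 y hy).1 (by positivity)
  · intro ij hij x hx heq
    obtain ⟨y, hy, rfl⟩ := hx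
    obtain ⟨h1, h2, h3⟩ := hA ij hij
    have hcpos : (0:ℝ) < (c ij.1 ij.2 : ℝ) := by exact_mod_cast hc ij.1 ij.2 h1 h2 h3
    rw [hpdef] at heq ⊢
    dsimp only at heq ⊢
    rw [map_smul, map_smul, smul_eq_mul, smul_eq_mul] at heq
    have := mul_left_cancel₀ (ne_of_gt hcpos) heq
    rw [((hfacts ij hij).2 y hy).2 this]
end

section
/- Subdivisions of the staircase shape D_{r+1} = {(i,j) : 1 ≤ i ≤ j ≤ r+1} into r+1 rectangles R_1,...,R_{r+1}, where each R_k is a rectangle (a product of an interval of i's and an interval of j's intersected with D) containing the diagonal box (k,k), are in bijection with plane binary trees on r+1 nodes; in particular, their number is the Catalan number C_{r+1} = (1/(r+2)) · binomial(2(r+1), r+1). -/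
/-- Plane binary trees. -/
inductive PBTree : Type
  | leaf : PBTree
  | node : PBTree → PBTree → PBTree

/-- The number of nodes of a plane binary tree. -/
def PBTree.size : PBTree → ℕ
  | .leaf => 0
  | .node l r => l.size + r.size + 1

def PBTree.toT : PBTree → Tree Unit
  | .leaf => Tree.nil
  | .node l r => Tree.node () l.toT r.toT

def PBTree.ofT : Tree Unit → PBTree
  | BinaryTree.nil => .leaf
  | BinaryTree.node _ l r => .node (PBTree.ofT l) (PBTree.ofT r)

lemma PBTree.ofT_toT : ∀ t : PBTree, PBTree.ofT t.toT = t
  | .leaf => rfl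
  | .node l r => by simp [toT, ofT, ofT_toT l, ofT_toT r]

lemma PBTree.toT_ofT : ∀ t : Tree Unit, (PBTree.ofT t).toT = t
  | BinaryTree.nil => rfl
  | BinaryTree.node _ l r => by simp [toT, ofT, toT_ofT l, toT_ofT r]

lemma PBTree.numNodes_toT : ∀ t : PBTree, t.toT.numNodes = t.size
  | .leaf => rfl
  | .node l r => by simp [toT, PBTree.size, Tree.numNodes, numNodes_toT l, numNodes_toT r]

def PBTree.equivTree : PBTree ≃ Tree Unit :=
  ⟨PBTree.toT, PBTree.ofT, PBTree.ofT_toT, PBTree.toT_ofT⟩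

noncomputable def pbEquiv (n : ℕ) : {t : PBTree // t.size = n} ≃ (Tree.treesOfNumNodesEq n) :=
  (PBTree.equivTree.subtypeEquiv (fun t => by
    simp [PBTree.equivTree, PBTree.numNodes_toT])).trans
    (Equiv.subtypeEquivRight (fun t => (BinaryTree.mem_treesOfNumNodesEq).symm))

instance (n : ℕ) : Finite {t : PBTree // t.size = n} := Finite.of_equiv _ (pbEquiv n).symm

lemma card_pbtree (n : ℕ) : Nat.card {t : PBTree // t.size = n} = catalan n := by
  rw [Nat.card_congr (pbEquiv n), Nat.card_eq_finsetCard,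
    BinaryTree.treesOfNumNodesEq_card_eq_catalan]

open Finset

def SubP (s n : ℕ) (R : Fin n → Finset (ℕ × ℕ)) : Prop :=
  (∀ k : Fin n, ∃ a b : ℕ, s + 1 ≤ a ∧ a ≤ s + (k : ℕ) + 1 ∧ s + (k : ℕ) + 1 ≤ b ∧
      b ≤ s + n ∧ R k = Finset.Icc a (s + (k : ℕ) + 1) ×ˢ Finset.Icc (s + (k : ℕ) + 1) b) ∧
  (∀ p : ℕ × ℕ, (s + 1 ≤ p.1 ∧ p.1 ≤ p.2 ∧ p.2 ≤ s + n) ↔ ∃! k : Fin n, p ∈ R k)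

abbrev Subd (s n : ℕ) : Type := {R : Fin n → Finset (ℕ × ℕ) // SubP s n R}

lemma SubP.mem_bounds {s n : ℕ} {R : Fin n → Finset (ℕ × ℕ)} (h : SubP s n R)
    {k : Fin n} {p : ℕ × ℕ} (hp : p ∈ R k) :
    s + 1 ≤ p.1 ∧ p.1 ≤ s + (k : ℕ) + 1 ∧ s + (k : ℕ) + 1 ≤ p.2 ∧ p.2 ≤ s + n := by
  obtain ⟨a, b, ha1, ha2, hb1, hb2, hRk⟩ := h.1 k
  rw [hRk, Finset.mem_product, Finset.mem_Icc, Finset.mem_Icc] at hp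
  omega

lemma SubP.uniq {s n : ℕ} {R : Fin n → Finset (ℕ × ℕ)} (h : SubP s n R)
    {k k' : Fin n} {p : ℕ × ℕ} (hp : p ∈ R k) (hp' : p ∈ R k') : k = k' := by
  have hb := h.mem_bounds hp
  obtain ⟨j, -, hj⟩ := (h.2 p).mp ⟨hb.1, le_trans hb.2.1 hb.2.2.1, hb.2.2.2⟩
  rw [hj k hp, hj k' hp']

instance subdFinite (s n : ℕ) : Finite (Subd s n) := by
  have : ∀ (x : Subd s n) (k : Fin n), x.1 k ∈ (Finset.Iic ((s+n, s+n) : ℕ × ℕ)).powerset := by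
    rintro ⟨R, h⟩ k
    obtain ⟨a, b, ha1, ha2, hb1, hb2, hRk⟩ := h.1 k
    rw [Finset.mem_powerset]
    show R k ⊆ _
    rw [hRk]
    intro p hp
    rw [Finset.mem_product, Finset.mem_Icc, Finset.mem_Icc] at hp
    rw [Finset.mem_Iic, Prod.le_def]
    constructor <;> simp <;> omega
  exact Finite.of_injective
    (fun x : Subd s n => fun k => (⟨x.1 k, this x k⟩ :
      {u // u ∈ (Finset.Iic ((s+n, s+n) : ℕ × ℕ)).powerset}))
    (fun x y hxy => Subtype.ext (funext fun k => congrArg Subtype.val (congrFun hxy k)))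

instance subdZeroUnique (s : ℕ) : Unique (Subd s 0) where
  default := ⟨Fin.elim0, by
    constructor
    · exact fun k => k.elim0
    · intro p
      constructor
      · omega
      · rintro ⟨k, -, -⟩; exact k.elim0⟩
  uniq x := Subtype.ext (funext fun k => k.elim0)

section Decomp

variable {s n : ℕ} {R : Fin (n + 1) → Finset (ℕ × ℕ)}

lemma root_spec (h : SubP s (n + 1) R) :
    ∃ k : Fin (n + 1),
      R k = Finset.Icc (s + 1) (s + (k : ℕ) + 1) ×ˢ Finset.Icc (s + (k : ℕ) + 1) (s + n + 1) := by
  obtain ⟨k, hk, -⟩ := (h.2 (s + 1, s + n + 1)).mp ⟨le_refl _, by omega, by omega⟩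
  obtain ⟨a, b, ha1, ha2, hb1, hb2, hRk⟩ := h.1 k
  refine ⟨k, ?_⟩
  rw [hRk] at hk ⊢
  rw [Finset.mem_product, Finset.mem_Icc, Finset.mem_Icc] at hk
  have ha : a = s + 1 := by omega
  have hb : b = s + n + 1 := by omega
  rw [ha, hb]

lemma left_rect (h : SubP s (n + 1) R) {k₀ : Fin (n + 1)}
    (hroot : R k₀ =
      Finset.Icc (s + 1) (s + (k₀ : ℕ) + 1) ×ˢ Finset.Icc (s + (k₀ : ℕ) + 1) (s + n + 1))
    {k : Fin (n + 1)} (hk : (k : ℕ) < (k₀ : ℕ)) :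
    ∃ a b : ℕ, s + 1 ≤ a ∧ a ≤ s + (k : ℕ) + 1 ∧ s + (k : ℕ) + 1 ≤ b ∧ b ≤ s + (k₀ : ℕ) ∧
      R k = Finset.Icc a (s + (k : ℕ) + 1) ×ˢ Finset.Icc (s + (k : ℕ) + 1) b := by
  obtain ⟨a, b, ha1, ha2, hb1, hb2, hRk⟩ := h.1 k
  refine ⟨a, b, ha1, ha2, hb1, ?_, hRk⟩
  by_contra hb
  have h1 : ((s + (k : ℕ) + 1, s + (k₀ : ℕ) + 1) : ℕ × ℕ) ∈ R k := by
    rw [hRk, Finset.mem_product, Finset.mem_Icc, Finset.mem_Icc]; omega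
  have h2 : ((s + (k : ℕ) + 1, s + (k₀ : ℕ) + 1) : ℕ × ℕ) ∈ R k₀ := by
    have := k₀.isLt
    rw [hroot, Finset.mem_product, Finset.mem_Icc, Finset.mem_Icc]; omega
  exact absurd (congrArg Fin.val (h.uniq h1 h2)) (by omega)

lemma right_rect (h : SubP s (n + 1) R) {k₀ : Fin (n + 1)}
    (hroot : R k₀ =
      Finset.Icc (s + 1) (s + (k₀ : ℕ) + 1) ×ˢ Finset.Icc (s + (k₀ : ℕ) + 1) (s + n + 1))
    {k : Fin (n + 1)} (hk : (k₀ : ℕ) < (k : ℕ)) :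
    ∃ a b : ℕ, s + (k₀ : ℕ) + 2 ≤ a ∧ a ≤ s + (k : ℕ) + 1 ∧ s + (k : ℕ) + 1 ≤ b ∧
      b ≤ s + n + 1 ∧
      R k = Finset.Icc a (s + (k : ℕ) + 1) ×ˢ Finset.Icc (s + (k : ℕ) + 1) b := by
  obtain ⟨a, b, ha1, ha2, hb1, hb2, hRk⟩ := h.1 k
  refine ⟨a, b, ?_, ha2, hb1, by omega, hRk⟩
  by_contra ha
  have h1 : ((s + (k₀ : ℕ) + 1, s + (k : ℕ) + 1) : ℕ × ℕ) ∈ R k := by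
    rw [hRk, Finset.mem_product, Finset.mem_Icc, Finset.mem_Icc]; omega
  have h2 : ((s + (k₀ : ℕ) + 1, s + (k : ℕ) + 1) : ℕ × ℕ) ∈ R k₀ := by
    have := k.isLt
    rw [hroot, Finset.mem_product, Finset.mem_Icc, Finset.mem_Icc]; omega
  exact absurd (congrArg Fin.val (h.uniq h1 h2)) (by omega)

lemma left_subP (h : SubP s (n + 1) R) {k₀ : Fin (n + 1)}
    (hroot : R k₀ =
      Finset.Icc (s + 1) (s + (k₀ : ℕ) + 1) ×ˢ Finset.Icc (s + (k₀ : ℕ) + 1) (s + n + 1)) :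
    SubP s (k₀ : ℕ) (fun j : Fin (k₀ : ℕ) => R ⟨j, lt_trans j.isLt k₀.isLt⟩) := by
  constructor
  · intro j
    obtain ⟨a, b, ha1, ha2, hb1, hb2, hRk⟩ :=
      left_rect h hroot (k := ⟨j, lt_trans j.isLt k₀.isLt⟩) j.isLt
    exact ⟨a, b, ha1, ha2, hb1, hb2, hRk⟩
  · intro p
    constructor
    · rintro ⟨h1, h2, h3⟩
      have hk₀n := k₀.isLt
      obtain ⟨k, hk, huniq⟩ := (h.2 p).mp ⟨h1, h2, by omega⟩
      have hkm : (k : ℕ) < (k₀ : ℕ) := by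
        have := h.mem_bounds hk; omega
      refine ⟨⟨k, hkm⟩, hk, ?_⟩
      intro j' hj'
      refine Fin.ext ?_
      simpa using congrArg Fin.val (huniq _ hj')
    · rintro ⟨j, hj, -⟩
      obtain ⟨a, b, ha1, ha2, hb1, hb2, hRk⟩ :=
        left_rect h hroot (k := ⟨j, lt_trans j.isLt k₀.isLt⟩) j.isLt
      replace hj : p ∈ R ⟨(j : ℕ), lt_trans j.isLt k₀.isLt⟩ := hj
      rw [hRk, Finset.mem_product, Finset.mem_Icc, Finset.mem_Icc] at hj
      simp only [Fin.val_mk] at *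
      omega

lemma right_subP (h : SubP s (n + 1) R) {k₀ : Fin (n + 1)}
    (hroot : R k₀ =
      Finset.Icc (s + 1) (s + (k₀ : ℕ) + 1) ×ˢ Finset.Icc (s + (k₀ : ℕ) + 1) (s + n + 1)) :
    SubP (s + (k₀ : ℕ) + 1) (n - (k₀ : ℕ))
      (fun j : Fin (n - (k₀ : ℕ)) =>
        R ⟨(k₀ : ℕ) + 1 + j, by have := j.isLt; omega⟩) := by
  have hk₀n : (k₀ : ℕ) < n + 1 := k₀.isLt
  constructor
  · intro j
    have hjn := j.isLt
    obtain ⟨a, b, ha1, ha2, hb1, hb2, hRk⟩ :=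
      right_rect h hroot (k := ⟨(k₀ : ℕ) + 1 + j, by omega⟩) (by simp; omega)
    simp only [Fin.val_mk] at ha2 hb1 hRk
    refine ⟨a, b, by omega, by omega, by omega, by omega, ?_⟩
    have e : s + ((k₀ : ℕ) + 1 + (j : ℕ)) + 1 = s + (k₀ : ℕ) + 1 + (j : ℕ) + 1 := by omega
    rw [e] at hRk
    exact hRk
  · intro p
    constructor
    · rintro ⟨h1, h2, h3⟩
      obtain ⟨k, hk, huniq⟩ := (h.2 p).mp ⟨by omega, h2, by omega⟩
      have hkm : (k₀ : ℕ) < (k : ℕ) := by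
        have := h.mem_bounds hk; omega
      have hkn := k.isLt
      refine ⟨⟨(k : ℕ) - ((k₀ : ℕ) + 1), by omega⟩, ?_, ?_⟩
      · show p ∈ R ⟨(k₀ : ℕ) + 1 + ((k : ℕ) - ((k₀ : ℕ) + 1)), by omega⟩
        have e : (⟨(k₀ : ℕ) + 1 + ((k : ℕ) - ((k₀ : ℕ) + 1)), by omega⟩ : Fin (n + 1)) = k :=
          Fin.ext (by simp; omega)
        rw [e]
        exact hk
      · intro j' hj'
        have := congrArg Fin.val (huniq _ hj')
        simp only [Fin.val_mk] at this
        exact Fin.ext (by simp; omega)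
    · rintro ⟨j, hj, -⟩
      have hjn := j.isLt
      obtain ⟨a, b, ha1, ha2, hb1, hb2, hRk⟩ :=
        right_rect h hroot (k := ⟨(k₀ : ℕ) + 1 + j, by omega⟩) (by simp; omega)
      simp only [Fin.val_mk] at ha2 hb1 hRk
      replace hj : p ∈ R ⟨(k₀ : ℕ) + 1 + (j : ℕ), by omega⟩ := hj
      rw [hRk, Finset.mem_product, Finset.mem_Icc, Finset.mem_Icc] at hj
      omega

end Decomp

def assemble (s n m : ℕ) (Rl : Fin m → Finset (ℕ × ℕ)) (Rr : Fin (n - m) → Finset (ℕ × ℕ)) :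
    Fin (n + 1) → Finset (ℕ × ℕ) := fun j =>
  if h : (j : ℕ) < m then Rl ⟨j, h⟩
  else if h2 : (j : ℕ) = m then
    Finset.Icc (s + 1) (s + m + 1) ×ˢ Finset.Icc (s + m + 1) (s + n + 1)
  else Rr ⟨(j : ℕ) - (m + 1), by have := j.isLt; omega⟩

lemma assemble_lt {s n m : ℕ} {Rl : Fin m → Finset (ℕ × ℕ)} {Rr : Fin (n - m) → Finset (ℕ × ℕ)}
    {j : Fin (n + 1)} (hj : (j : ℕ) < m) :
    assemble s n m Rl Rr j = Rl ⟨j, hj⟩ := dif_pos hj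

lemma assemble_eq {s n m : ℕ} {Rl : Fin m → Finset (ℕ × ℕ)} {Rr : Fin (n - m) → Finset (ℕ × ℕ)}
    {j : Fin (n + 1)} (hj : (j : ℕ) = m) :
    assemble s n m Rl Rr j =
      Finset.Icc (s + 1) (s + m + 1) ×ˢ Finset.Icc (s + m + 1) (s + n + 1) := by
  unfold assemble
  rw [dif_neg (by omega), dif_pos hj]

lemma assemble_gt {s n m : ℕ} {Rl : Fin m → Finset (ℕ × ℕ)} {Rr : Fin (n - m) → Finset (ℕ × ℕ)}
    {j : Fin (n + 1)} (hj : m < (j : ℕ)) :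
    assemble s n m Rl Rr j = Rr ⟨(j : ℕ) - (m + 1), by have := j.isLt; omega⟩ := by
  unfold assemble
  rw [dif_neg (by omega), dif_neg (by omega)]

lemma assemble_subP {s n m : ℕ} (hm : m ≤ n) {Rl : Fin m → Finset (ℕ × ℕ)}
    {Rr : Fin (n - m) → Finset (ℕ × ℕ)} (hl : SubP s m Rl) (hr : SubP (s + m + 1) (n - m) Rr) :
    SubP s (n + 1) (assemble s n m Rl Rr) := by
  constructor
  · intro j
    rcases lt_trichotomy (j : ℕ) m with hj | hj | hj
    · obtain ⟨a, b, ha1, ha2, hb1, hb2, hRk⟩ := hl.1 ⟨j, hj⟩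
      simp only [Fin.val_mk] at ha2 hb1 hRk
      exact ⟨a, b, ha1, ha2, hb1, by omega, by rw [assemble_lt hj]; exact hRk⟩
    · refine ⟨s + 1, s + n + 1, le_refl _, by omega, by omega, by omega, ?_⟩
      rw [assemble_eq hj, hj]
    · have hjn := j.isLt
      obtain ⟨a, b, ha1, ha2, hb1, hb2, hRk⟩ := hr.1 ⟨(j : ℕ) - (m + 1), by omega⟩
      simp only [Fin.val_mk] at ha2 hb1 hRk
      have e : s + m + 1 + ((j : ℕ) - (m + 1)) + 1 = s + (j : ℕ) + 1 := by omega
      rw [e] at ha2 hb1 hRk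
      refine ⟨a, b, by omega, ha2, hb1, by omega, ?_⟩
      rw [assemble_gt hj]
      exact hRk
  · intro p
    constructor
    · rintro ⟨h1, h2, h3⟩
      by_cases hc1 : p.2 ≤ s + m
      · obtain ⟨j, hj, huniq⟩ := (hl.2 p).mp ⟨h1, h2, hc1⟩
        have hjm := j.isLt
        refine ⟨⟨j, by omega⟩, ?_, ?_⟩
        · show p ∈ assemble s n m Rl Rr ⟨j, by omega⟩
          rw [assemble_lt (j := ⟨j, by omega⟩) (by simpa using hjm)]
          exact hj
        · intro j' hj'
          rcases lt_trichotomy (j' : ℕ) m with hj'm | hj'm | hj'm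
          · rw [assemble_lt hj'm] at hj'
            have := congrArg Fin.val (huniq _ hj')
            simp only [Fin.val_mk] at this
            exact Fin.ext (by simpa using this)
          · rw [assemble_eq hj'm, Finset.mem_product, Finset.mem_Icc, Finset.mem_Icc] at hj'
            omega
          · rw [assemble_gt hj'm] at hj'
            have := hr.mem_bounds hj'
            omega
      · by_cases hc2 : s + m + 2 ≤ p.1
        · have hpn : p.2 ≤ s + m + 1 + (n - m) := by omega
          obtain ⟨j, hj, huniq⟩ := (hr.2 p).mp ⟨by omega, h2, hpn⟩
          have hjm := j.isLt
          refine ⟨⟨m + 1 + (j : ℕ), by omega⟩, ?_, ?_⟩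
          · show p ∈ assemble s n m Rl Rr ⟨m + 1 + (j : ℕ), by omega⟩
            rw [assemble_gt (j := ⟨m + 1 + (j : ℕ), by omega⟩) (by simp; omega)]
            have e : (⟨(⟨m + 1 + (j : ℕ), by omega⟩ : Fin (n + 1)) - (m + 1), by
                have := j.isLt; omega⟩ : Fin (n - m)) = j := Fin.ext (by simp)
            rw [e]
            exact hj
          · intro j' hj'
            rcases lt_trichotomy (j' : ℕ) m with hj'm | hj'm | hj'm
            · rw [assemble_lt hj'm] at hj'
              have := hl.mem_bounds hj'
              simp only [Fin.val_mk] at this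
              omega
            · rw [assemble_eq hj'm, Finset.mem_product, Finset.mem_Icc, Finset.mem_Icc] at hj'
              omega
            · rw [assemble_gt hj'm] at hj'
              have := congrArg Fin.val (huniq _ hj')
              simp only [Fin.val_mk] at this
              exact Fin.ext (by simp; omega)
        · refine ⟨⟨m, by omega⟩, ?_, ?_⟩
          · show p ∈ assemble s n m Rl Rr ⟨m, by omega⟩
            rw [assemble_eq (by simp), Finset.mem_product, Finset.mem_Icc, Finset.mem_Icc]
            omega
          · intro j' hj'
            rcases lt_trichotomy (j' : ℕ) m with hj'm | hj'm | hj'm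
            · rw [assemble_lt hj'm] at hj'
              have := hl.mem_bounds hj'
              omega
            · exact Fin.ext (by simpa using hj'm)
            · rw [assemble_gt hj'm] at hj'
              have := hr.mem_bounds hj'
              omega
    · rintro ⟨j, hj, -⟩
      rcases lt_trichotomy (j : ℕ) m with hjm | hjm | hjm
      · rw [assemble_lt hjm] at hj
        have := hl.mem_bounds hj
        simp only [Fin.val_mk] at this
        omega
      · rw [assemble_eq hjm, Finset.mem_product, Finset.mem_Icc, Finset.mem_Icc] at hj
        omega
      · rw [assemble_gt hjm] at hj
        have := hr.mem_bounds hj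
        simp only [Fin.val_mk] at this
        omega

def gmap (s n : ℕ) :
    (Σ k : Fin (n + 1), Subd s (k : ℕ) × Subd (s + (k : ℕ) + 1) (n - (k : ℕ))) →
      Subd s (n + 1) :=
  fun y => ⟨assemble s n (y.1 : ℕ) y.2.1.1 y.2.2.1,
    assemble_subP (by have := y.1.isLt; omega) y.2.1.2 y.2.2.2⟩

lemma root_mem {s n m : ℕ} (hm : m ≤ n) (Rl : Fin m → Finset (ℕ × ℕ))
    (Rr : Fin (n - m) → Finset (ℕ × ℕ)) :
    ((s + 1, s + n + 1) : ℕ × ℕ) ∈ assemble s n m Rl Rr ⟨m, by omega⟩ := by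
  rw [assemble_eq (by simp), Finset.mem_product, Finset.mem_Icc, Finset.mem_Icc]
  omega

lemma gmap_bijective (s n : ℕ) : Function.Bijective (gmap s n) := by
  constructor
  · rintro ⟨k, ⟨Rl, hl⟩, ⟨Rr, hr⟩⟩ ⟨k', ⟨Rl', hl'⟩, ⟨Rr', hr'⟩⟩ hEq
    have hF := congrArg Subtype.val hEq
    simp only [gmap] at hF
    have hkn := k.isLt
    have hk'n := k'.isLt
    -- first, k = k'
    have hk : k = k' := by
      have hmem : ((s + 1, s + n + 1) : ℕ × ℕ) ∈ assemble s n (k : ℕ) Rl Rr ⟨(k : ℕ), hkn⟩ :=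
        root_mem (by omega) Rl Rr
      have hmem' : ((s + 1, s + n + 1) : ℕ × ℕ) ∈ assemble s n (k' : ℕ) Rl' Rr' ⟨(k' : ℕ), hk'n⟩ :=
        root_mem (by omega) Rl' Rr'
      rw [← hF] at hmem'
      have := (assemble_subP (s := s) (by omega : (k : ℕ) ≤ n) hl hr).uniq hmem hmem'
      have := congrArg Fin.val this
      exact Fin.ext (by simpa using this)
    subst hk
    obtain ⟨hl2, hr2⟩ : Rl = Rl' ∧ Rr = Rr' := by
      constructor
      · funext j
        have hjm := j.isLt
        have := congrFun hF ⟨(j : ℕ), by omega⟩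
        rwa [assemble_lt (by simpa using hjm), assemble_lt (by simpa using hjm)] at this
      · funext j
        have hjm := j.isLt
        have := congrFun hF ⟨(k : ℕ) + 1 + (j : ℕ), by omega⟩
        rw [assemble_gt (by simp; omega), assemble_gt (by simp; omega)] at this
        have e : (⟨((⟨(k : ℕ) + 1 + (j : ℕ), by omega⟩ : Fin (n + 1)) : ℕ) - ((k : ℕ) + 1), by
            have := j.isLt; omega⟩ : Fin (n - (k : ℕ))) = j := Fin.ext (by simp)
        rwa [e] at this
    subst hl2
    subst hr2
    rfl
  · rintro ⟨R, h⟩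
    obtain ⟨k₀, hroot⟩ := root_spec h
    have hk₀n := k₀.isLt
    refine ⟨⟨k₀, ⟨_, left_subP h hroot⟩, ⟨_, right_subP h hroot⟩⟩, ?_⟩
    apply Subtype.ext
    funext j
    show assemble s n (k₀ : ℕ) _ _ j = R j
    rcases lt_trichotomy (j : ℕ) (k₀ : ℕ) with hj | hj | hj
    · rw [assemble_lt hj]
    · rw [assemble_eq hj]
      have : j = k₀ := Fin.ext hj
      rw [this, hroot]
    · rw [assemble_gt hj]
      show R _ = R j
      congr 1
      have hjn := j.isLt
      exact Fin.ext (by simp; omega)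

lemma card_subd : ∀ n s : ℕ, Nat.card (Subd s n) = catalan n := by
  intro n
  induction n using Nat.strong_induction_on with
  | _ n ih =>
    intro s
    match n, ih with
    | 0, _ => simp [Nat.card_unique]
    | (n + 1), ih =>
      have e : Subd s (n + 1) ≃
          Σ k : Fin (n + 1), Subd s (k : ℕ) × Subd (s + (k : ℕ) + 1) (n - (k : ℕ)) :=
        (Equiv.ofBijective (gmap s n) (gmap_bijective s n)).symm
      rw [Nat.card_congr e]
      letI : ∀ t m : ℕ, Fintype (Subd t m) := fun t m => Fintype.ofFinite _
      rw [Nat.card_eq_fintype_card, Fintype.card_sigma, catalan_succ]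
      refine Finset.sum_congr rfl fun k _ => ?_
      have hk := k.isLt
      rw [Fintype.card_prod, ← Nat.card_eq_fintype_card, ← Nat.card_eq_fintype_card,
        ih (k : ℕ) (by omega) s, ih (n - (k : ℕ)) (by omega) (s + (k : ℕ) + 1)]

/-- A subdivision of the staircase shape `D_{r+1} = {(i,j) : 1 ≤ i ≤ j ≤ r+1}`
into `r+1` rectangles `R k`, each a rectangle `[a, k] × [k, b]` of boxes
containing the diagonal box `(k, k)`, which together partition `D_{r+1}`. -/
def IsStaircaseSubdiv (r : ℕ) (R : Fin (r + 1) → Finset (ℕ × ℕ)) : Prop :=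
  (∀ k : Fin (r + 1), ∃ a b : ℕ, 1 ≤ a ∧ a ≤ (k : ℕ) + 1 ∧ (k : ℕ) + 1 ≤ b ∧
      b ≤ r + 1 ∧ R k = Finset.Icc a ((k : ℕ) + 1) ×ˢ Finset.Icc ((k : ℕ) + 1) b) ∧
  (∀ p : ℕ × ℕ, (1 ≤ p.1 ∧ p.1 ≤ p.2 ∧ p.2 ≤ r + 1) ↔ ∃! k : Fin (r + 1), p ∈ R k)

/-- subdivisions of the staircase shape `D_{r+1}` into `r+1`
rectangles, each containing a diagonal box, are in bijection with plane binary
trees on `r+1` nodes; in particular their number is the Catalan number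
`C_{r+1} = binomial(2(r+1), r+1) / (r+2)`. -/
theorem staircase_subdivisions_equiv_trees_card_catalan (r : ℕ) :
    Nonempty ({R : Fin (r + 1) → Finset (ℕ × ℕ) // IsStaircaseSubdiv r R} ≃
        {t : PBTree // t.size = r + 1}) ∧
    Nat.card {R : Fin (r + 1) → Finset (ℕ × ℕ) // IsStaircaseSubdiv r R} =
      catalan (r + 1) ∧
    catalan (r + 1) = (Nat.choose (2 * (r + 1)) (r + 1)) / (r + 2) := by
  classical
  have iffP : ∀ R : Fin (r + 1) → Finset (ℕ × ℕ),
      IsStaircaseSubdiv r R ↔ SubP 0 (r + 1) R := by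
    intro R
    simp [IsStaircaseSubdiv, SubP]
  have eqv : {R : Fin (r + 1) → Finset (ℕ × ℕ) // IsStaircaseSubdiv r R} ≃ Subd 0 (r + 1) :=
    Equiv.subtypeEquivRight iffP
  haveI : Finite {R : Fin (r + 1) → Finset (ℕ × ℕ) // IsStaircaseSubdiv r R} :=
    Finite.of_equiv _ eqv.symm
  have hcard : Nat.card {R : Fin (r + 1) → Finset (ℕ × ℕ) // IsStaircaseSubdiv r R} =
      catalan (r + 1) := by
    rw [Nat.card_congr eqv, card_subd]
  refine ⟨Finite.card_eq.mp ?_, hcard, ?_⟩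
  · rw [hcard, card_pbtree]
  · rw [catalan_eq_centralBinom_div]
    rfl
end

section
/- Let P be a finite poset of cardinality n and Q = {q_1} a single element of P. Then the set of values σ(q_1) over all linear extensions σ of P is exactly the integer interval [1 + d_-, n - d_+], where d_- is the number of elements strictly below q_1 and d_+ is the number of elements strictly above q_1. -/
open Finset

section Aux
variable {P : Type*} [Fintype P]

/-- From a linear-order relation on a finite type, get an enumeration with explicit values. -/
lemma exists_equiv_of_rel (r : P → P → Prop)
    (htot : ∀ x y, r x y ∨ r y x) (htrans : ∀ x y z, r x y → r y z → r x z)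
    (hanti : ∀ x y, r x y → r y x → x = y) :
    ∃ σ : P ≃ Fin (Fintype.card P),
      (∀ x y, r x y → x ≠ y → σ x < σ y) ∧
      ∀ x, (σ x : ℕ) = {y | r y x ∧ y ≠ x}.ncard := by
  classical
  have hlt : ∀ x : P, (univ.filter (fun y => r y x ∧ y ≠ x)).card < Fintype.card P := by
    intro x
    rw [← Finset.card_univ]
    refine Finset.card_lt_card (Finset.filter_ssubset.2 ⟨x, mem_univ x, ?_⟩)
    simp
  set g : P → Fin (Fintype.card P) := fun x => ⟨_, hlt x⟩ with hg
  have hmono : ∀ x y, r x y → x ≠ y → g x < g y := by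
    intro x y hr hne
    have hss : (univ.filter (fun z => r z x ∧ z ≠ x)) ⊂ (univ.filter (fun z => r z y ∧ z ≠ y)) := by
      constructor
      · intro z hz
        simp only [mem_filter, mem_univ, true_and] at hz ⊢
        refine ⟨htrans _ _ _ hz.1 hr, ?_⟩
        rintro rfl
        exact hne (hanti _ _ hr hz.1)
      · rw [Finset.not_subset]
        exact ⟨x, by simp [hr, hne], by simp⟩
    exact Finset.card_lt_card hss
  have hinj : Function.Injective g := by
    intro a b hab
    by_contra hne
    rcases htot a b with h | h
    · exact absurd hab (ne_of_lt (hmono _ _ h hne))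
    · exact absurd hab.symm (ne_of_lt (hmono _ _ h (Ne.symm hne)))
  have hbij : Function.Bijective g :=
    (Fintype.bijective_iff_injective_and_card g).2 ⟨hinj, by simp⟩
  refine ⟨Equiv.ofBijective g hbij, hmono, fun x => ?_⟩
  have hv : ((Equiv.ofBijective g hbij) x : ℕ) = (univ.filter (fun y => r y x ∧ y ≠ x)).card := rfl
  rw [hv, Set.ncard_eq_toFinset_card', Set.toFinset_setOf]

variable [PartialOrder P]

/-- existence of lower sets of each admissible size -/
lemma exists_lower (q₁ : P) [DecidableEq P] [DecidablePred (· < q₁)]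
    [DecidablePred (fun x => ¬ q₁ ≤ x)] :
    ∀ k, (univ.filter (· < q₁)).card ≤ k →
    k ≤ (univ.filter (fun x => ¬ q₁ ≤ x)).card →
    ∃ S : Finset P, S.card = k ∧ (∀ x ∈ S, ¬ q₁ ≤ x) ∧ (∀ x, x < q₁ → x ∈ S) ∧
      ∀ x y, x ≤ y → y ∈ S → x ∈ S := by
  intro k hk
  induction k, hk using Nat.le_induction with
  | base =>
    intro _
    refine ⟨univ.filter (· < q₁), rfl, ?_, ?_, ?_⟩
    · intro x hx
      simp only [mem_filter] at hx
      exact fun hle => absurd (lt_of_le_of_lt hle hx.2) (lt_irrefl q₁)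
    · intro x hx; simp [hx]
    · intro x y hxy hy
      simp only [mem_filter, mem_univ, true_and] at hy ⊢
      exact lt_of_le_of_lt hxy hy
  | succ k hk ih =>
    intro hk2
    obtain ⟨S, hScard, hSup, hSlow, hSdown⟩ := ih (le_of_lt (Nat.lt_of_succ_le hk2))
    set T := univ.filter (fun x : P => ¬ q₁ ≤ x) with hT
    have hST : S ⊆ T := by
      intro x hx
      simp only [hT, mem_filter, mem_univ, true_and]
      exact hSup x hx
    have hne : ¬ T ⊆ S := by
      intro h
      have := Finset.card_le_card h
      omega
    obtain ⟨x₀, hx₀T, hx₀S⟩ := Finset.not_subset.1 hne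
    obtain ⟨m, hm, hmin⟩ : ∃ m ∈ T \ S, ∀ x ∈ T \ S, ¬ x < m := by
      obtain ⟨m, hm⟩ := Finset.exists_minimal (s := T \ S) ⟨x₀, Finset.mem_sdiff.2 ⟨hx₀T, hx₀S⟩⟩
      exact ⟨m, hm.1, fun x hx hlt => not_le_of_gt hlt (hm.2 hx hlt.le)⟩
    rw [Finset.mem_sdiff] at hm
    have hmT : ¬ q₁ ≤ m := by simpa [hT] using hm.1
    refine ⟨insert m S, ?_, ?_, ?_, ?_⟩
    · rw [Finset.card_insert_of_notMem hm.2, hScard]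
    · intro x hx
      rcases Finset.mem_insert.1 hx with rfl | hx
      · exact hmT
      · exact hSup x hx
    · intro x hx; exact Finset.mem_insert_of_mem (hSlow x hx)
    · intro x y hxy hy
      rcases Finset.mem_insert.1 hy with rfl | hy
      · rcases eq_or_lt_of_le hxy with rfl | hlt
        · exact Finset.mem_insert_self _ _
        · refine Finset.mem_insert_of_mem ?_
          by_contra hxS
          have hxT : x ∈ T := by
            simp only [hT, mem_filter, mem_univ, true_and]
            intro hqx
            exact hmT (le_trans hqx hxy)
          exact hmin x (Finset.mem_sdiff.2 ⟨hxT, hxS⟩) hlt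
      · exact Finset.mem_insert_of_mem (hSdown x y hxy hy)

end Aux

/-- for a finite poset `P` with `|P| = n` and an element `q₁`,
the set of (1-based) values `σ q₁` over all linear extensions `σ` of `P` is
exactly the integer interval `[1 + d₋, n - d₊]`, where `d₋` is the number of
elements strictly below `q₁` and `d₊` the number strictly above. -/
theorem single_element_values_interval
    {P : Type*} [PartialOrder P] [Fintype P] (q₁ : P) :
    {m : ℕ | ∃ σ : P ≃ Fin (Fintype.card P),
        (∀ x y : P, x < y → σ x < σ y) ∧ m = (σ q₁ : ℕ) + 1} =
      Set.Icc (1 + {x : P | x < q₁}.ncard)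
        (Fintype.card P - {x : P | q₁ < x}.ncard) := by
  classical
  set n := Fintype.card P with hn
  have hdm : {x : P | x < q₁}.ncard = (univ.filter (· < q₁)).card := by
    rw [Set.ncard_eq_toFinset_card', Set.toFinset_setOf]
  have hdp : {x : P | q₁ < x}.ncard = (univ.filter (q₁ < ·)).card := by
    rw [Set.ncard_eq_toFinset_card', Set.toFinset_setOf]
  set dm := (univ.filter (· < q₁)).card with hdm'
  set dp := (univ.filter (q₁ < ·)).card with hdp'
  -- card of the "not above q₁" set
  have hle_card : (univ.filter (fun x : P => q₁ ≤ x)).card = dp + 1 := by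
    have : univ.filter (fun x : P => q₁ ≤ x) = insert q₁ (univ.filter (q₁ < ·)) := by
      ext x
      simp only [mem_filter, mem_univ, true_and, Finset.mem_insert]
      constructor
      · intro h
        rcases eq_or_lt_of_le h with rfl | h
        · exact Or.inl rfl
        · exact Or.inr h
      · rintro (rfl | h)
        · exact le_refl _
        · exact le_of_lt h
    rw [this, Finset.card_insert_of_notMem (by simp)]
  have hT_card : (univ.filter (fun x : P => ¬ q₁ ≤ x)).card = n - (dp + 1) := by
    rw [Finset.filter_not, Finset.card_sdiff_of_subset (Finset.filter_subset _ _), hle_card, card_univ]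
  have hdpn : dp + 1 ≤ n := by
    rw [← hle_card, hn, ← Finset.card_univ]
    exact Finset.card_le_card (Finset.filter_subset _ _)
  ext m
  simp only [Set.mem_setOf_eq, Set.mem_Icc, hdm, hdp, ← hdm', ← hdp', ← hn]
  constructor
  · rintro ⟨σ, hmono, rfl⟩
    constructor
    · -- dm ≤ σ q₁
      have h1 : dm ≤ (σ q₁ : ℕ) := by
        rw [hdm', ← Fin.card_Iio (σ q₁)]
        refine Finset.card_le_card_of_injOn σ ?_ (fun a _ b _ hab => σ.injective hab)
        intro x hx
        simp only [Finset.mem_coe, mem_filter, mem_univ, true_and] at hx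
        simpa using hmono x q₁ hx
      omega
    · -- σ q₁ + 1 ≤ n - dp
      have h2 : dp ≤ n - 1 - (σ q₁ : ℕ) := by
        rw [hdp', ← Fin.card_Ioi (σ q₁)]
        refine Finset.card_le_card_of_injOn σ ?_ (fun a _ b _ hab => σ.injective hab)
        intro x hx
        simp only [Finset.mem_coe, mem_filter, mem_univ, true_and] at hx
        simpa using hmono q₁ x hx
      have h3 : (σ q₁ : ℕ) < n := (σ q₁).2
      omega
  · rintro ⟨h1, h2⟩
    set k := m - 1 with hkdef
    have hm1 : 1 ≤ m := le_trans (by omega) h1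
    have hk1 : dm ≤ k := by omega
    have hk2 : k ≤ (univ.filter (fun x : P => ¬ q₁ ≤ x)).card := by
      rw [hT_card]; omega
    obtain ⟨S, hScard, hSup, hSlow, hSdown⟩ := exists_lower q₁ k hk1 hk2
    have hq₁S : q₁ ∉ S := fun h => hSup q₁ h (le_refl q₁)
    -- linear extension of the partial order
    obtain ⟨s, hlin, hext⟩ := extend_partialOrder ((· ≤ ·) : P → P → Prop)
    -- rank function
    set rank : P → ℕ := fun x => if x ∈ S then 0 else if x = q₁ then 1 else 2 with hrank
    set r : P → P → Prop := fun x y => rank x < rank y ∨ (rank x = rank y ∧ s x y) with hr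
    have hrtot : ∀ x y, r x y ∨ r y x := by
      intro x y
      rcases lt_trichotomy (rank x) (rank y) with h | h | h
      · exact Or.inl (Or.inl h)
      · rcases hlin.total x y with hs | hs
        · exact Or.inl (Or.inr ⟨h, hs⟩)
        · exact Or.inr (Or.inr ⟨h.symm, hs⟩)
      · exact Or.inr (Or.inl h)
    have hrtrans : ∀ x y z, r x y → r y z → r x z := by
      rintro x y z (h | ⟨h, hs⟩) (h' | ⟨h', hs'⟩)
      · exact Or.inl (lt_trans h h')
      · exact Or.inl (h'.symm ▸ h)
      · exact Or.inl (h ▸ h')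
      · exact Or.inr ⟨h.trans h', hlin.trans _ _ _ hs hs'⟩
    have hranti : ∀ x y, r x y → r y x → x = y := by
      rintro x y (h | ⟨h, hs⟩) (h' | ⟨h', hs'⟩)
      · omega
      · omega
      · omega
      · exact hlin.antisymm _ _ hs hs'
    obtain ⟨σ, hσmono, hσval⟩ := exists_equiv_of_rel r hrtot hrtrans hranti
    have hrankq₁ : rank q₁ = 1 := by simp [hrank, hq₁S]
    have hrankmono : ∀ x y : P, x < y → rank x ≤ rank y := by
      intro x y hxy
      by_cases hy : y ∈ S
      · have hx : x ∈ S := hSdown x y (le_of_lt hxy) hy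
        simp [hrank, hx, hy]
      · by_cases hyq : y = q₁
        · subst hyq
          have hx : x ∈ S := hSlow x hxy
          simp [hrank, hx, hq₁S]
        · by_cases hx : x ∈ S <;> by_cases hxq : x = q₁ <;>
            simp [hrank, hx, hxq, hy, hyq, hq₁S]
    refine ⟨σ, ?_, ?_⟩
    · intro x y hxy
      refine hσmono x y ?_ (ne_of_lt hxy)
      rcases lt_or_eq_of_le (hrankmono x y hxy) with h | h
      · exact Or.inl h
      · exact Or.inr ⟨h, hext _ _ (le_of_lt hxy)⟩
    · -- m = σ q₁ + 1
      have hset : {y | r y q₁ ∧ y ≠ q₁} = ↑S := by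
        ext y
        simp only [Set.mem_setOf_eq, Finset.coe_sort_coe, Finset.mem_coe]
        constructor
        · rintro ⟨hr' , hne⟩
          rcases hr' with h | ⟨h, _⟩
          · rw [hrankq₁] at h
            by_contra hyS
            simp [hrank, hyS] at h
            split at h <;> omega
          · rw [hrankq₁] at h
            by_contra hyS
            simp only [hrank, hyS, if_false] at h
            split at h
            · exact hne (by assumption)
            · omega
        · intro hyS
          refine ⟨Or.inl ?_, ?_⟩
          · rw [hrankq₁]; simp [hrank, hyS]
          · rintro rfl; exact hq₁S hyS
      rw [hσval, hset, Set.ncard_coe_finset, hScard]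
      omega
end

section
/- Let P be a finite poset, Q = {q_1 < ... < q_r} a chain in P, and suppose (c_1,...,c_r) and (c'_1,...,c'_r) are both (P,Q)-subposet vectors (i.e., arise as (σ(q_1),...,σ(q_r)) for linear extensions σ). Then every integer vector on the segment between them obtained by the convexity of N'_{P,Q} is again a (P,Q)-subposet vector; in particular, for r = 1, if c and c' are achievable values of σ(q_1) with c < c', then every integer c'' with c ≤ c'' ≤ c' is achievable. -/
open scoped Classical
set_option linter.unusedSectionVars false
set_option maxHeartbeats 1000000

section Aux

variable {P : Type*} [PartialOrder P] [Fintype P]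

noncomputable def DD (a : P) : Finset P := Finset.univ.filter (fun x => x ≤ a)

noncomputable def UU (a : P) : Finset P := Finset.univ.filter (fun x => a < x)

def IsIdeal (I : Finset P) : Prop := ∀ ⦃x y : P⦄, x ∈ I → y ≤ x → y ∈ I

lemma mem_DD {a x : P} : x ∈ DD a ↔ x ≤ a := by simp [DD]
lemma mem_UU {a x : P} : x ∈ UU a ↔ a < x := by simp [UU]

lemma isIdeal_DD (a : P) : IsIdeal (DD a) :=
  fun _ _ hx hyx => mem_DD.mpr (le_trans hyx (mem_DD.mp hx))

lemma isIdeal_compl_UU (a : P) : IsIdeal ((Finset.univ : Finset P) \ UU a) := by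
  intro x y hx hyx
  simp only [Finset.mem_sdiff, Finset.mem_univ, true_and, mem_UU] at *
  exact fun hay => hx (lt_of_lt_of_le hay hyx)

lemma IsIdeal.union {I J : Finset P} (hI : IsIdeal I) (hJ : IsIdeal J) : IsIdeal (I ∪ J) := by
  intro x y hx hyx
  rcases Finset.mem_union.mp hx with h | h
  · exact Finset.mem_union_left _ (hI h hyx)
  · exact Finset.mem_union_right _ (hJ h hyx)

lemma IsIdeal.inter {I J : Finset P} (hI : IsIdeal I) (hJ : IsIdeal J) : IsIdeal (I ∩ J) := by
  intro x y hx hyx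
  exact Finset.mem_inter.mpr ⟨hI (Finset.mem_inter.mp hx).1 hyx, hJ (Finset.mem_inter.mp hx).2 hyx⟩

lemma isIdeal_empty : IsIdeal (∅ : Finset P) := fun x _ hx _ => absurd hx (Finset.notMem_empty x)

/-- Between two nested ideals, every intermediate size is achieved by an ideal. -/
lemma exists_ideal_between {B : Finset P} (hB : IsIdeal B) :
    ∀ (kk : ℕ) (A : Finset P), IsIdeal A → A ⊆ B → A.card + kk ≤ B.card →
    ∃ K : Finset P, IsIdeal K ∧ A ⊆ K ∧ K ⊆ B ∧ K.card = A.card + kk := by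
  intro kk
  induction kk with
  | zero => exact fun A hA hAB _ => ⟨A, hA, subset_rfl, hAB, rfl⟩
  | succ kk ih =>
    intro A hA hAB hcard
    have hne : (B \ A).Nonempty := by
      rw [Finset.sdiff_nonempty]
      intro hBA
      have := Finset.card_le_card hBA
      omega
    obtain ⟨x, hxm⟩ := Finset.exists_minimal hne
    obtain ⟨hx, hxmin⟩ : x ∈ B \ A ∧ ∀ y ∈ B \ A, ¬ y < x :=
      ⟨hxm.1, fun y hy hlt => hlt.not_ge (hxm.2 hy hlt.le)⟩
    have hxB : x ∈ B := (Finset.mem_sdiff.mp hx).1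
    have hxA : x ∉ A := (Finset.mem_sdiff.mp hx).2
    have hA' : IsIdeal (insert x A) := by
      intro z y hz hyz
      rcases Finset.mem_insert.mp hz with rfl | hzA
      · by_cases hyA : y ∈ A
        · exact Finset.mem_insert_of_mem hyA
        · rcases eq_or_lt_of_le hyz with rfl | hlt
          · exact Finset.mem_insert_self _ _
          · exact absurd hlt (hxmin y (Finset.mem_sdiff.mpr ⟨hB hxB hyz, hyA⟩))
      · exact Finset.mem_insert_of_mem (hA hzA hyz)
    have hc : (insert x A).card = A.card + 1 := Finset.card_insert_of_notMem hxA
    obtain ⟨K, h1, h2, h3, h4⟩ := ih (insert x A) hA' (Finset.insert_subset hxB hAB) (by omega)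
    exact ⟨K, h1, (Finset.subset_insert _ _).trans h2, h3, by omega⟩

/-- There is an injective, strictly order-preserving function from a finite poset to ℕ
with values below the cardinality. -/
lemma exists_linearization :
    ∃ j : P → ℕ, (∀ x, j x < Fintype.card P) ∧ Function.Injective j ∧
      ∀ x y : P, x < y → j x < j y := by
  have main : ∀ s : Finset P, ∃ j : P → ℕ,
      (∀ x ∈ s, j x < s.card) ∧ Set.InjOn j s ∧
      (∀ x ∈ s, ∀ y ∈ s, x < y → j x < j y) := by
    intro s
    induction s using Finset.strongInduction with
    | _ s ih =>
      rcases Finset.eq_empty_or_nonempty s with rfl | hne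
      · exact ⟨fun _ => 0, by simp, by simp [Set.InjOn], by simp⟩
      · obtain ⟨a, ham⟩ := Finset.exists_maximal hne
        obtain ⟨ha, hamax⟩ : a ∈ s ∧ ∀ y ∈ s, ¬ a < y :=
          ⟨ham.1, fun y hy hlt => hlt.not_ge (ham.2 hy hlt.le)⟩
        have hss : s.erase a ⊂ s := Finset.erase_ssubset ha
        obtain ⟨j0, hb0, hinj0, hmono0⟩ := ih _ hss
        have hcard : (s.erase a).card = s.card - 1 := Finset.card_erase_of_mem ha
        have hcardlt : (s.erase a).card < s.card := Finset.card_lt_card hss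
        refine ⟨fun x => if x = a then (s.erase a).card else j0 x, ?_, ?_, ?_⟩
        · intro x hx
          by_cases hxa : x = a
          · simp [hxa, hcardlt]
          · simp only [if_neg hxa]
            exact lt_trans (hb0 x (Finset.mem_erase.mpr ⟨hxa, hx⟩)) hcardlt
        · intro x hx y hy hxy
          by_cases hxa : x = a <;> by_cases hya : y = a
          · rw [hxa, hya]
          · simp only [if_pos hxa, if_neg hya] at hxy
            exact absurd hxy.symm (Nat.ne_of_lt (hb0 y (Finset.mem_erase.mpr ⟨hya, hy⟩)))
          · simp only [if_neg hxa, if_pos hya] at hxy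
            exact absurd hxy (Nat.ne_of_lt (hb0 x (Finset.mem_erase.mpr ⟨hxa, hx⟩)))
          · simp only [if_neg hxa, if_neg hya] at hxy
            exact hinj0 (Finset.mem_coe.mpr (Finset.mem_erase.mpr ⟨hxa, hx⟩))
              (Finset.mem_coe.mpr (Finset.mem_erase.mpr ⟨hya, hy⟩)) hxy
        · intro x hx y hy hlt
          by_cases hya : y = a
          · have hxa : x ≠ a := hya ▸ ne_of_lt hlt
            simp only [if_neg hxa, if_pos hya]
            exact hb0 x (Finset.mem_erase.mpr ⟨hxa, hx⟩)
          · have hxa : x ≠ a := by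
              rintro rfl
              exact hamax y hy hlt
            simp only [if_neg hxa, if_neg hya]
            exact hmono0 x (Finset.mem_erase.mpr ⟨hxa, hx⟩) y (Finset.mem_erase.mpr ⟨hya, hy⟩) hlt
  obtain ⟨j, h1, h2, h3⟩ := main Finset.univ
  refine ⟨j, fun x => ?_, fun x y hxy => ?_, fun x y h => h3 x (Finset.mem_univ x) y (Finset.mem_univ y) h⟩
  · simpa using h1 x (Finset.mem_univ x)
  · exact h2 (by simp) (by simp) hxy


/-- From a flag of ideals realize a linear extension with prescribed positions. -/
lemma exists_extension_of_flag {r : ℕ} (q : Fin r → P) (hq : StrictMono q)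
    (W : Fin r → Finset P)
    (hWid : ∀ i, IsIdeal (W i)) (hWmono : ∀ i j : Fin r, i ≤ j → W i ⊆ W j)
    (hqin : ∀ i, q i ∈ W i) (hmax : ∀ (i : Fin r), ∀ x ∈ W i, ¬ q i < x) :
    ∃ σ : P ≃ Fin (Fintype.card P),
      (∀ x y : P, x < y → σ x < σ y) ∧ ∀ i, ((σ (q i) : ℕ) + 1) = (W i).card := by
  set n := Fintype.card P with hn
  obtain ⟨j, hjlt, hjinj, hjmono⟩ := exists_linearization (P:=P)
  set t : P → ℕ := fun y => ((Finset.univ : Finset (Fin r)).filter (fun m => y ∉ W m)).card with ht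
  set b : P → ℕ := fun y => if ∃ i : Fin r, q i = y then 1 else 0 with hb
  set k : P → ℕ := fun y => (2 * t y + b y) * n + j y with hk
  have hble : ∀ y, b y ≤ 1 := by intro y; simp only [hb]; split <;> omega
  have hnpos : ∀ (_ : P), 0 < n := fun y => Fintype.card_pos_iff.mpr ⟨y⟩
  -- cardinal facts about Fin-filters
  have finlt : ∀ (i : Fin r), ((Finset.univ : Finset (Fin r)).filter (fun m => m < i)).card = i.1 := by
    intro i
    have h : (Finset.univ : Finset (Fin r)).filter (fun m => m < i) = Finset.Iio i := by
      ext m; simp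
    rw [h, Fin.card_Iio]
  have finle : ∀ (i : Fin r), ((Finset.univ : Finset (Fin r)).filter (fun m => m ≤ i)).card = i.1 + 1 := by
    intro i
    have h : (Finset.univ : Finset (Fin r)).filter (fun m => m ≤ i) = Finset.Iic i := by
      ext m; simp
    rw [h, Fin.card_Iic]
  -- t facts
  have factT : ∀ (y : P) (i : Fin r), y ∈ W i ↔ t y ≤ i.1 := by
    intro y i
    constructor
    · intro hy
      have hsub : (Finset.univ : Finset (Fin r)).filter (fun m => y ∉ W m) ⊆
          (Finset.univ : Finset (Fin r)).filter (fun m => m < i) := by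
        intro m hm
        simp only [Finset.mem_filter, Finset.mem_univ, true_and] at hm ⊢
        by_contra hmi
        exact hm (hWmono i m (le_of_not_gt hmi) hy)
      have h2 := Finset.card_le_card hsub
      rw [finlt] at h2
      simp only [ht]
      omega
    · intro hty
      by_contra hy
      have hsub : (Finset.univ : Finset (Fin r)).filter (fun m => m ≤ i) ⊆
          (Finset.univ : Finset (Fin r)).filter (fun m => y ∉ W m) := by
        intro m hm
        simp only [Finset.mem_filter, Finset.mem_univ, true_and] at hm ⊢
        exact fun hmem => hy (hWmono m i hm hmem)
      have h2 := Finset.card_le_card hsub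
      rw [finle] at h2
      simp only [ht] at hty
      omega
  have tmono : ∀ x y : P, x ≤ y → t x ≤ t y := by
    intro x y hxy
    apply Finset.card_le_card
    intro m hm
    simp only [Finset.mem_filter, Finset.mem_univ, true_and] at hm ⊢
    exact fun hmem => hm (hWid m hmem hxy)
  have tq : ∀ i : Fin r, t (q i) = i.1 := by
    intro i
    have hle : t (q i) ≤ i.1 := (factT _ i).mp (hqin i)
    rcases Nat.eq_zero_or_pos i.1 with h0 | hpos
    · omega
    · set m : Fin r := ⟨i.1 - 1, by omega⟩ with hmdef
      have hm : m < i := by rw [Fin.lt_iff_val_lt_val]; simp [hmdef]; omega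
      have hnot : q i ∉ W m := fun hmem => hmax _ _ hmem (hq hm)
      have h2 : ¬ (t (q i) ≤ m.1) := fun hle2 => hnot ((factT _ _).mpr hle2)
      simp only [hmdef] at h2
      omega
  have bq : ∀ i : Fin r, b (q i) = 1 := by
    intro i
    simp only [hb]
    exact if_pos ⟨i, rfl⟩
  have bzero : ∀ (y : P) (i : Fin r), t y = i.1 → y ≠ q i → b y = 0 := by
    intro y i hty hne
    simp only [hb]
    rw [if_neg]
    rintro ⟨i', rfl⟩
    rw [tq i'] at hty
    exact hne (congrArg q (Fin.ext hty))
  -- basic k bounds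
  have kub : ∀ y : P, k y < (2 * t y + 2) * n := by
    intro y
    have h1 := hjlt y
    have h2 := hble y
    simp only [hk]
    nlinarith
  have klb : ∀ y : P, (2 * t y) * n ≤ k y := by
    intro y
    simp only [hk]
    nlinarith [Nat.zero_le (j y), Nat.zero_le (b y), Nat.zero_le n]
  have kstep : ∀ x y : P, t x < t y → k x < k y := by
    intro x y hxy
    have h1 := kub x
    have h2 := klb y
    have h3 : (2 * t x + 2) * n ≤ (2 * t y) * n := Nat.mul_le_mul_right n (by omega)
    omega
  -- k is injective
  have kinj : Function.Injective k := by
    intro x y hxy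
    have hx := hjlt x
    have hy := hjlt y
    have hmx : k x % n = j x := by
      simp only [hk]
      rw [add_comm, Nat.add_mul_mod_self_right]
      exact Nat.mod_eq_of_lt hx
    have hmy : k y % n = j y := by
      simp only [hk]
      rw [add_comm, Nat.add_mul_mod_self_right]
      exact Nat.mod_eq_of_lt hy
    exact hjinj (by rw [← hmx, ← hmy, hxy])
  -- k strictly monotone w.r.t. P
  have kmono : ∀ x y : P, x < y → k x < k y := by
    intro x y hxy
    have htle : t x ≤ t y := tmono x y (le_of_lt hxy)
    rcases lt_or_eq_of_le htle with hlt | heq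
    · exact kstep x y hlt
    · -- same block
      have hjlt' := hjlt x
      by_cases hby : ∃ i : Fin r, q i = y
      · obtain ⟨i, rfl⟩ := hby
        have hbx : b x = 0 := by
          apply bzero x i
          · rw [heq, tq i]
          · intro hxq
            rw [hxq] at hxy
            exact lt_irrefl _ hxy
        have hby' : b (q i) = 1 := bq i
        simp only [hk, hbx, hby', heq]
        nlinarith
      · have hby0 : b y = 0 := by simp only [hb]; rw [if_neg hby]
        by_cases hbx : ∃ i : Fin r, q i = x
        · obtain ⟨i, rfl⟩ := hbx
          exfalso
          have hty : t y = i.1 := by rw [← heq, tq i]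
          have : y ∈ W i := (factT y i).mpr (le_of_eq hty)
          exact hmax i y this hxy
        · have hbx0 : b x = 0 := by simp only [hb]; rw [if_neg hbx]
          have := hjmono x y hxy
          simp only [hk, hbx0, hby0, heq]
          omega
  -- define σ
  set pc : P → ℕ := fun x => ((Finset.univ : Finset P).filter (fun y => k y < k x)).card with hpc
  have pclt : ∀ x : P, pc x < n := by
    intro x
    have hss : (Finset.univ : Finset P).filter (fun y => k y < k x) ⊂ Finset.univ := by
      rw [Finset.ssubset_univ_iff]
      intro hcontra
      have : x ∈ (Finset.univ : Finset P).filter (fun y => k y < k x) := by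
        rw [hcontra]; exact Finset.mem_univ x
      simp at this
    have := Finset.card_lt_card hss
    simpa [Finset.card_univ] using this
  have pcmono : ∀ x y : P, k x < k y → pc x < pc y := by
    intro x y hkxy
    apply Finset.card_lt_card
    constructor
    · intro z hz
      simp only [Finset.mem_filter, Finset.mem_univ, true_and] at hz ⊢
      omega
    · intro hcontra
      have hx : x ∈ (Finset.univ : Finset P).filter (fun y' => k y' < k y) := by
        simp [hkxy]
      have := hcontra hx
      simp at this
  have pcinj : Function.Injective (fun x : P => (⟨pc x, pclt x⟩ : Fin n)) := by
    intro x y hxy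
    simp only [Fin.mk.injEq] at hxy
    by_contra hne
    have hkne : k x ≠ k y := fun h => hne (kinj h)
    rcases lt_or_gt_of_ne hkne with h | h
    · exact absurd hxy (Nat.ne_of_lt (pcmono x y h))
    · exact absurd hxy.symm (Nat.ne_of_lt (pcmono y x h))
  have hbij : Function.Bijective (fun x : P => (⟨pc x, pclt x⟩ : Fin n)) := by
    rw [Fintype.bijective_iff_injective_and_card]
    exact ⟨pcinj, by simp [hn]⟩
  refine ⟨Equiv.ofBijective _ hbij, ?_, ?_⟩
  · intro x y hxy
    have := pcmono x y (kmono x y hxy)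
    simpa [Equiv.ofBijective, Fin.lt_iff_val_lt_val] using this
  · intro i
    have hset : (Finset.univ : Finset P).filter (fun y => k y < k (q i)) = (W i).erase (q i) := by
      ext y
      simp only [Finset.mem_filter, Finset.mem_univ, true_and, Finset.mem_erase]
      constructor
      · intro hky
        have hne : y ≠ q i := by
          intro h; rw [h] at hky; omega
        refine ⟨hne, ?_⟩
        rw [factT y i]
        by_contra hty
        have h1 : t (q i) + 1 ≤ t y := by rw [tq i]; omega
        exact absurd (kstep (q i) y (by omega)) (by omega)
      · rintro ⟨hne, hyW⟩
        have hty : t y ≤ i.1 := (factT y i).mp hyW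
        rcases lt_or_eq_of_le hty with hlt | heq
        · apply kstep
          rw [tq i]; omega
        · have hb0 : b y = 0 := bzero y i heq hne
          have hkq : (2 * i.1 + 1) * n ≤ k (q i) := by
            simp only [hk, tq i, bq i]
            omega
          have : k y < (2 * i.1 + 1) * n := by
            simp only [hk, hb0, heq]
            have := hjlt y
            nlinarith
          omega
    have hcard : pc (q i) = (W i).card - 1 := by
      simp only [hpc, hset]
      exact Finset.card_erase_of_mem (hqin i)
    have hWpos : 1 ≤ (W i).card := Finset.card_pos.mpr ⟨q i, hqin i⟩
    have : ((Equiv.ofBijective _ hbij) (q i) : ℕ) = pc (q i) := rfl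
    rw [this, hcard]
    omega


lemma DD_mono {a a' : P} (h : a ≤ a') : DD a ⊆ DD a' := by
  intro x hx
  rw [mem_DD] at hx ⊢
  exact le_trans hx h

/-- The key combinatorial lemma: a flag of ideals with prescribed cardinalities exists,
provided the difference constraints hold. -/
lemma flagExists : ∀ (r : ℕ) (q : Fin r → P) (c : Fin r → ℕ) (E : Finset P),
    StrictMono q → IsIdeal E →
    (∀ (i : Fin r), ∀ x ∈ E, ¬ q i < x) →
    (∀ i, (E ∪ DD (q i)).card ≤ c i) →
    (∀ i, c i + (UU (q i)).card ≤ Fintype.card P) →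
    (∀ i j : Fin r, i < j → (DD (q j) ∩ UU (q i)).card + c i ≤ c j) →
    ∃ I : Fin r → Finset P,
      (∀ i, IsIdeal (I i)) ∧ (∀ i, E ⊆ I i) ∧ (∀ i j : Fin r, i ≤ j → I i ⊆ I j) ∧
      (∀ i, DD (q i) ⊆ I i) ∧ (∀ (i : Fin r), ∀ x ∈ I i, ¬ q i < x) ∧
      (∀ i, (I i).card = c i) := by
  intro r
  induction r with
  | zero =>
    intro q c E _ _ _ _ _ _
    exact ⟨fun i => i.elim0, fun i => i.elim0, fun i => i.elim0, fun i j _ => i.elim0,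
      fun i => i.elim0, fun i => i.elim0, fun i => i.elim0⟩
  | succ r ih =>
    intro q c E hq hE hEU hL hU hP
    set n := Fintype.card P with hn
    set B1 : Finset P := Finset.univ \ UU (q 0) with hB1
    have hB1id : IsIdeal B1 := isIdeal_compl_UU (q 0)
    have hEB1 : E ⊆ B1 := by
      intro x hx
      simp only [hB1, Finset.mem_sdiff, Finset.mem_univ, true_and, mem_UU]
      exact hEU 0 x hx
    have hB1card : B1.card = n - (UU (q 0)).card := by
      simp only [hB1]
      rw [Finset.card_sdiff_of_subset (Finset.subset_univ _), Finset.card_univ]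
    set C : Fin (r + 1) → Finset P := fun l => E ∪ (DD (q l) ∩ B1) with hC
    have hCid : ∀ l, IsIdeal (C l) :=
      fun l => IsIdeal.union hE (IsIdeal.inter (isIdeal_DD (q l)) hB1id)
    have hCmono : ∀ l l' : Fin (r + 1), l ≤ l' → C l ⊆ C l' := by
      intro l l' hll
      apply Finset.union_subset_union_right
      exact Finset.inter_subset_inter_right (DD_mono (hq.monotone hll))
    have hCB1 : ∀ l, C l ⊆ B1 := by
      intro l
      apply Finset.union_subset hEB1 Finset.inter_subset_right
    -- the greatest index whose C-set still fits below c 0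
    set Pk : ℕ → Prop := fun m => ∃ h : m < r + 1, (C ⟨m, h⟩).card ≤ c 0 with hPkdef
    have hPk0 : Pk 0 := by
      refine ⟨Nat.succ_pos r, ?_⟩
      have hsub : C ⟨0, Nat.succ_pos r⟩ ⊆ E ∪ DD (q 0) := by
        apply Finset.union_subset Finset.subset_union_left
        exact (Finset.inter_subset_left).trans Finset.subset_union_right
      exact le_trans (Finset.card_le_card hsub) (hL 0)
    set kk : ℕ := Nat.findGreatest Pk r with hkk
    have hkle : kk ≤ r := Nat.findGreatest_le r
    have hPkk : Pk kk := Nat.findGreatest_spec (Nat.zero_le r) hPk0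
    set kF : Fin (r + 1) := ⟨kk, by omega⟩ with hkF
    have hCk : (C kF).card ≤ c 0 := by
      obtain ⟨h, hh⟩ := hPkk
      exact hh
    -- the top of the interval in which we choose I0
    set TT : Finset P := if h : kk + 1 < r + 1 then C ⟨kk + 1, h⟩ else B1 with hTT
    have hTTid : IsIdeal TT := by
      by_cases h : kk + 1 < r + 1
      · simp only [hTT, dif_pos h]; exact hCid _
      · simp only [hTT, dif_neg h]; exact hB1id
    have hTTB1 : TT ⊆ B1 := by
      by_cases h : kk + 1 < r + 1
      · simp only [hTT, dif_pos h]; exact hCB1 _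
      · simp only [hTT, dif_neg h]
        exact subset_rfl
    have hCkTT : C kF ⊆ TT := by
      by_cases h : kk + 1 < r + 1
      · simp only [hTT, dif_pos h]
        exact hCmono kF ⟨kk + 1, h⟩ (by rw [Fin.le_def]; exact Nat.le_succ kk)
      · simp only [hTT, dif_neg h]; exact hCB1 _
    have hTTcard : c 0 ≤ TT.card := by
      by_cases h : kk + 1 < r + 1
      · simp only [hTT, dif_pos h]
        have h1 : Nat.findGreatest Pk r < kk + 1 := by rw [← hkk]; omega
        have hng : ¬ Pk (kk + 1) := Nat.findGreatest_is_greatest h1 (by omega)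
        simp only [hPkdef] at hng
        push_neg at hng
        have := hng h
        omega
      · simp only [hTT, dif_neg h]
        rw [hB1card]
        have := hU 0
        omega
    -- choose I0
    obtain ⟨I0, hI0id, hI0sup, hI0sub, hI0card⟩ :=
      exists_ideal_between hTTid (c 0 - (C kF).card) (C kF) (hCid kF) hCkTT (by omega)
    have hI0card' : I0.card = c 0 := by omega
    have hI0B1 : I0 ⊆ B1 := hI0sub.trans hTTB1
    -- key property: |I0 ∪ DD (q i.succ)| ≤ c i.succ
    have hLkey : ∀ i : Fin r, (I0 ∪ DD (q i.succ)).card ≤ c i.succ := by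
      intro i
      by_cases hcase : i.1 + 1 ≤ kk
      · -- C i.succ ⊆ I0
        have hCsub : C i.succ ⊆ I0 := by
          refine (hCmono i.succ kF ?_).trans hI0sup
          rw [Fin.le_def]
          exact hcase
        have hsplit : I0 ∪ DD (q i.succ) = I0 ∪ (DD (q i.succ) \ I0) := by
          rw [Finset.union_sdiff_self_eq_union]
        have hdisj : Disjoint I0 (DD (q i.succ) \ I0) := Finset.disjoint_sdiff
        have hsubU : DD (q i.succ) \ I0 ⊆ DD (q i.succ) ∩ UU (q 0) := by
          intro x hx
          obtain ⟨hxD, hxI⟩ := Finset.mem_sdiff.mp hx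
          refine Finset.mem_inter.mpr ⟨hxD, ?_⟩
          rw [mem_UU]
          by_contra hq0x
          have hxB1 : x ∈ B1 := by
            simp only [hB1, Finset.mem_sdiff, Finset.mem_univ, true_and, mem_UU]
            exact hq0x
          exact hxI (hCsub (Finset.mem_union_right _ (Finset.mem_inter.mpr ⟨hxD, hxB1⟩)))
        have h1 : (I0 ∪ DD (q i.succ)).card = I0.card + (DD (q i.succ) \ I0).card := by
          rw [hsplit, Finset.card_union_of_disjoint hdisj]
        have h2 : (DD (q i.succ) \ I0).card ≤ (DD (q i.succ) ∩ UU (q 0)).card :=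
          Finset.card_le_card hsubU
        have h3 := hP 0 i.succ (Fin.succ_pos i)
        omega
      · -- I0 ⊆ TT = C ⟨kk+1⟩ ⊆ E ∪ DD (q i.succ)
        have hlt : kk + 1 < r + 1 := by
          have := i.2
          omega
        have hTTeq : TT = C ⟨kk + 1, hlt⟩ := by simp only [hTT, dif_pos hlt]
        have hsub2 : TT ⊆ E ∪ DD (q i.succ) := by
          rw [hTTeq]
          apply Finset.union_subset Finset.subset_union_left
          refine (Finset.inter_subset_left).trans ?_
          refine (DD_mono (hq.monotone ?_)).trans Finset.subset_union_right
          rw [Fin.le_def]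
          have := i.2
          simp only [Fin.val_succ]
          omega
        have : I0 ∪ DD (q i.succ) ⊆ E ∪ DD (q i.succ) := by
          apply Finset.union_subset (hI0sub.trans hsub2) Finset.subset_union_right
        exact le_trans (Finset.card_le_card this) (hL i.succ)
    -- apply induction hypothesis
    have hq' : StrictMono (fun i : Fin r => q i.succ) := by
      intro i j hij
      exact hq (Fin.succ_lt_succ_iff.mpr hij)
    have hEU' : ∀ (i : Fin r), ∀ x ∈ I0, ¬ q i.succ < x := by
      intro i x hx hlt
      have hx1 : x ∈ B1 := hI0B1 hx
      simp only [hB1, Finset.mem_sdiff, Finset.mem_univ, true_and, mem_UU] at hx1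
      exact hx1 (lt_trans (hq (Fin.succ_pos i)) hlt)
    obtain ⟨I', hI'id, hI'sup, hI'mono, hI'D, hI'max, hI'card⟩ :=
      ih (fun i => q i.succ) (fun i => c i.succ) I0 hq' hI0id hEU' hLkey
        (fun i => hU i.succ)
        (fun i j hij => hP i.succ j.succ (Fin.succ_lt_succ_iff.mpr hij))
    have hEI0 : E ⊆ I0 :=
      (Finset.subset_union_left).trans ((hCmono 0 kF (Fin.zero_le kF)).trans hI0sup)
    have hDD0 : DD (q 0) ⊆ I0 := by
      have hDB1 : DD (q 0) ⊆ B1 := by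
        intro x hx
        simp only [hB1, Finset.mem_sdiff, Finset.mem_univ, true_and, mem_UU]
        exact not_lt_of_ge (mem_DD.mp hx)
      have : DD (q 0) ⊆ C 0 := by
        intro x hx
        exact Finset.mem_union_right _ (Finset.mem_inter.mpr ⟨hx, hDB1 hx⟩)
      exact this.trans ((hCmono 0 kF (Fin.zero_le kF)).trans hI0sup)
    have hmax0 : ∀ x ∈ I0, ¬ q 0 < x := by
      intro x hx
      have hx1 := hI0B1 hx
      simp only [hB1, Finset.mem_sdiff, Finset.mem_univ, true_and, mem_UU] at hx1
      exact hx1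
    -- assemble
    refine ⟨Fin.cases I0 I', ?_, ?_, ?_, ?_, ?_, ?_⟩
    · intro i
      induction i using Fin.cases with
      | zero => simpa using hI0id
      | succ i => simpa using hI'id i
    · intro i
      induction i using Fin.cases with
      | zero => simpa using hEI0
      | succ i => simpa using hEI0.trans (hI'sup i)
    · intro i j hij
      induction i using Fin.cases with
      | zero =>
        induction j using Fin.cases with
        | zero => simp
        | succ j => simpa using hI'sup j
      | succ i =>
        induction j using Fin.cases with
        | zero =>
          exfalso
          have := Fin.le_zero_iff.mp hij
          exact Fin.succ_ne_zero i this
        | succ j =>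
          have hij' : i ≤ j := by
            rw [Fin.le_def] at hij ⊢
            simpa [Fin.val_succ] using hij
          simpa using hI'mono i j hij'
    · intro i
      induction i using Fin.cases with
      | zero => simpa using hDD0
      | succ i => simpa using hI'D i
    · intro i
      induction i using Fin.cases with
      | zero => simpa using hmax0
      | succ i => simpa using hI'max i
    · intro i
      induction i using Fin.cases with
      | zero => simpa using hI0card'
      | succ i => simpa using hI'card i


end Aux

/-- `v` is a `(P,Q)`-subposet vector (with 1-based values) for the chain `q`. -/
def IsSubposetVector {P : Type*} [PartialOrder P] [Fintype P]
    {r : ℕ} (q : Fin r → P) (v : Fin r → ℤ) : Prop :=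
  ∃ σ : P ≃ Fin (Fintype.card P),
    (∀ x y : P, x < y → σ x < σ y) ∧ ∀ i : Fin r, v i = (σ (q i) : ℕ) + 1

section Aux2
variable {P : Type*} [PartialOrder P] [Fintype P]

/-- Necessity of the difference constraints. -/
lemma constraints_of_subposetVector {r : ℕ} (q : Fin r → P) (hq : StrictMono q)
    (v : Fin r → ℤ) (h : IsSubposetVector q v) :
    (∀ i, ((DD (q i)).card : ℤ) ≤ v i) ∧
    (∀ i, v i + ((UU (q i)).card : ℤ) ≤ (Fintype.card P : ℤ)) ∧
    (∀ i j : Fin r, i < j → ((DD (q j) ∩ UU (q i)).card : ℤ) + v i ≤ v j) := by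
  obtain ⟨σ, hσ, hv⟩ := h
  set Iset : Fin r → Finset P := fun i => Finset.univ.filter (fun x => σ x ≤ σ (q i)) with hIset
  have hcard : ∀ i, (Iset i).card = (σ (q i)).1 + 1 := by
    intro i
    have himg : Finset.image σ (Iset i) =
        Finset.univ.filter (fun m : Fin (Fintype.card P) => m ≤ σ (q i)) := by
      ext m
      simp only [hIset, Finset.mem_image, Finset.mem_filter, Finset.mem_univ, true_and]
      constructor
      · rintro ⟨x, hx, rfl⟩; exact hx
      · intro hm; exact ⟨σ.symm m, by simpa using hm, by simp⟩
    have h2 := Finset.card_image_of_injective (Iset i) σ.injective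
    rw [himg] at h2
    have h3 : Finset.univ.filter (fun m : Fin (Fintype.card P) => m ≤ σ (q i)) = Finset.Iic (σ (q i)) := by
      ext m; simp
    rw [h3, Fin.card_Iic] at h2
    omega
  have hDsub : ∀ i, DD (q i) ⊆ Iset i := by
    intro i x hx
    rw [mem_DD] at hx
    simp only [hIset, Finset.mem_filter, Finset.mem_univ, true_and]
    rcases eq_or_lt_of_le hx with rfl | hlt
    · exact le_rfl
    · exact le_of_lt (hσ _ _ hlt)
  have hdisj : ∀ i, Disjoint (Iset i) (UU (q i)) := by
    intro i
    rw [Finset.disjoint_left]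
    intro x hx hxU
    simp only [hIset, Finset.mem_filter, Finset.mem_univ, true_and] at hx
    rw [mem_UU] at hxU
    exact absurd hx (not_le_of_gt (hσ _ _ hxU))
  refine ⟨?_, ?_, ?_⟩
  · intro i
    have := Finset.card_le_card (hDsub i)
    rw [hcard i] at this
    rw [hv i]
    exact_mod_cast this
  · intro i
    have h4 : (Iset i ∪ UU (q i)).card ≤ Fintype.card P := by
      rw [← Finset.card_univ]
      exact Finset.card_le_card (Finset.subset_univ _)
    rw [Finset.card_union_of_disjoint (hdisj i), hcard i] at h4
    rw [hv i]
    exact_mod_cast h4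
  · intro i j hij
    have hIsub : Iset i ⊆ Iset j := by
      intro x hx
      simp only [hIset, Finset.mem_filter, Finset.mem_univ, true_and] at hx ⊢
      exact le_trans hx (le_of_lt (hσ _ _ (hq hij)))
    have hsub : DD (q j) ∩ UU (q i) ⊆ Iset j \ Iset i := by
      intro x hx
      obtain ⟨hxD, hxU⟩ := Finset.mem_inter.mp hx
      refine Finset.mem_sdiff.mpr ⟨hDsub j hxD, ?_⟩
      intro hxI
      exact Finset.disjoint_left.mp (hdisj i) hxI hxU
    have h5 := Finset.card_le_card hsub
    rw [Finset.card_sdiff_of_subset hIsub, hcard i, hcard j] at h5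
    have h6 : (σ (q i)).1 + 1 ≤ (σ (q j)).1 + 1 := by
      have := hσ _ _ (hq hij)
      rw [Fin.lt_def] at this
      omega
    rw [hv i, hv j]
    have h7 : ((DD (q j) ∩ UU (q i)).card : ℤ) ≤ ((σ (q j)).1 + 1 : ℤ) - ((σ (q i)).1 + 1 : ℤ) := by
      push_cast
      omega
    omega

/-- Sufficiency of the difference constraints. -/
lemma subposetVector_of_constraints {r : ℕ} (q : Fin r → P) (hq : StrictMono q)
    (v : Fin r → ℤ)
    (h1 : ∀ i, ((DD (q i)).card : ℤ) ≤ v i)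
    (h2 : ∀ i, v i + ((UU (q i)).card : ℤ) ≤ (Fintype.card P : ℤ))
    (h3 : ∀ i j : Fin r, i < j → ((DD (q j) ∩ UU (q i)).card : ℤ) + v i ≤ v j) :
    IsSubposetVector q v := by
  have hpos : ∀ i, (0 : ℤ) ≤ v i := by
    intro i
    exact le_trans (by exact_mod_cast Nat.zero_le _) (h1 i)
  set c : Fin r → ℕ := fun i => (v i).toNat with hc
  have hvc : ∀ i, (c i : ℤ) = v i := fun i => Int.toNat_of_nonneg (hpos i)
  obtain ⟨I, hIid, _, hImono, hID, hImax, hIcard⟩ :=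
    flagExists r q c ∅ hq isIdeal_empty (fun i x hx => absurd hx (Finset.notMem_empty x))
      (by
        intro i
        rw [Finset.empty_union]
        have := h1 i
        rw [← hvc i] at this
        exact_mod_cast this)
      (by
        intro i
        have := h2 i
        rw [← hvc i] at this
        exact_mod_cast this)
      (by
        intro i j hij
        have := h3 i j hij
        rw [← hvc i, ← hvc j] at this
        exact_mod_cast this)
  obtain ⟨σ, hσ, hσpos⟩ := exists_extension_of_flag q hq I hIid hImono
    (fun i => hID i (mem_DD.mpr le_rfl)) hImax
  refine ⟨σ, hσ, fun i => ?_⟩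
  rw [← hvc i]
  have := hσpos i
  rw [hIcard i] at this
  exact_mod_cast this.symm


end Aux2

/-- if `v` and `v'` are `(P,Q)`-subposet vectors for a chain
`Q = {q 1 < ... < q r}` in a finite poset `P`, then every integer vector lying
on the segment between them is again a `(P,Q)`-subposet vector; in particular,
for a single element `q₁` (`r = 1`), every integer between two achievable
values of `σ q₁` is achievable. -/
theorem subposet_vectors_integrally_convex
    {P : Type*} [PartialOrder P] [Fintype P]
    (r : ℕ) (q : Fin r → P) (hq : StrictMono q) :
    (∀ v v' w : Fin r → ℤ,
      IsSubposetVector q v → IsSubposetVector q v' →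
      (fun i => (w i : ℝ)) ∈ segment ℝ (fun i => (v i : ℝ)) (fun i => (v' i : ℝ)) →
      IsSubposetVector q w) ∧
    (∀ q₁ : P, ∀ c c' c'' : ℤ,
      IsSubposetVector (fun _ : Fin 1 => q₁) (fun _ => c) →
      IsSubposetVector (fun _ : Fin 1 => q₁) (fun _ => c') →
      c ≤ c'' → c'' ≤ c' →
      IsSubposetVector (fun _ : Fin 1 => q₁) (fun _ => c'')) := by
  constructor
  · intro v v' w hv hv' hseg
    obtain ⟨a, b, ha, hb, hab, hsum⟩ := hseg
    have hw : ∀ i, a * (v i : ℝ) + b * (v' i : ℝ) = (w i : ℝ) := by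
      intro i
      have := congrFun hsum i
      simpa [Pi.add_apply, Pi.smul_apply, smul_eq_mul] using this
    obtain ⟨n1, n2, n3⟩ := constraints_of_subposetVector q hq v hv
    obtain ⟨m1, m2, m3⟩ := constraints_of_subposetVector q hq v' hv'
    apply subposetVector_of_constraints q hq
    · intro i
      have hr : ((DD (q i)).card : ℝ) ≤ (w i : ℝ) := by
        rw [← hw i]
        have e1 : ((DD (q i)).card : ℝ) ≤ (v i : ℝ) := by exact_mod_cast n1 i
        have e2 : ((DD (q i)).card : ℝ) ≤ (v' i : ℝ) := by exact_mod_cast m1 i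
        nlinarith
      exact_mod_cast hr
    · intro i
      have hr : (w i : ℝ) + ((UU (q i)).card : ℝ) ≤ (Fintype.card P : ℝ) := by
        rw [← hw i]
        have e1 : (v i : ℝ) + ((UU (q i)).card : ℝ) ≤ (Fintype.card P : ℝ) := by
          exact_mod_cast n2 i
        have e2 : (v' i : ℝ) + ((UU (q i)).card : ℝ) ≤ (Fintype.card P : ℝ) := by
          exact_mod_cast m2 i
        nlinarith
      exact_mod_cast hr
    · intro i j hij
      have hr : ((DD (q j) ∩ UU (q i)).card : ℝ) + (w i : ℝ) ≤ (w j : ℝ) := by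
        rw [← hw i, ← hw j]
        have e1 : ((DD (q j) ∩ UU (q i)).card : ℝ) + (v i : ℝ) ≤ (v j : ℝ) := by
          exact_mod_cast n3 i j hij
        have e2 : ((DD (q j) ∩ UU (q i)).card : ℝ) + (v' i : ℝ) ≤ (v' j : ℝ) := by
          exact_mod_cast m3 i j hij
        nlinarith
      exact_mod_cast hr
  · intro q₁ c c' c'' hc hc' h1 h2
    have hq1 : StrictMono (fun _ : Fin 1 => q₁) := by
      intro i j hij
      rw [Fin.lt_def] at hij
      have hi := i.2
      have hj := j.2
      omega
    obtain ⟨n1, n2, n3⟩ := constraints_of_subposetVector _ hq1 _ hc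
    obtain ⟨m1, m2, m3⟩ := constraints_of_subposetVector _ hq1 _ hc'
    apply subposetVector_of_constraints _ hq1
    · intro i
      exact le_trans (n1 i) h1
    · intro i
      exact le_trans (by linarith [m2 i]) (le_refl (Fintype.card P : ℤ))
    · intro i j hij
      rw [Fin.lt_def] at hij
      have hi := i.2
      have hj := j.2
      omega
end
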